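/- arXiv:2407.10051 — 8 statements merged into one kernel-verified Lean document; each statement's English description precedes it below -/
import Mathlib

section
/- For every nonzero element a of the subfield F_{p^t} of F_q, the character sum over Δ satisfies Σ_{x ∈ Δ} χ(ax) = −K_t(a²). -/
open Finset

lemma quadAux {K : Type*} [Field K] {x y : K} (hx : x ≠ 0) (hy : y ≠ 0)
    (h : x + x⁻¹ = y + y⁻¹) : y = x ∨ y = x⁻¹ := by
  have hx1 : x * x⁻¹ = 1 := mul_inv_cancel₀ hx
  have hy1 : y * y⁻¹ = 1 := mul_inv_cancel₀ hy
  have h0 : (y - x) * (y - x⁻¹) = 0 := by linear_combination (-y) * h + hx1 - hy1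
  rcases mul_eq_zero.mp h0 with h' | h'
  · exact Or.inl (sub_eq_zero.mp h')
  · exact Or.inr (sub_eq_zero.mp h')

lemma quadCard {K : Type*} [Field K] [DecidableEq K] {c : K} {s : Finset K}
    (hs : ∀ x ∈ s, x ≠ 0 ∧ x + x⁻¹ = c) : s.card ≤ 2 := by
  rcases s.eq_empty_or_nonempty with h | ⟨x, hx⟩
  · simp [h]
  · have hsub : s ⊆ {x, x⁻¹} := by
      intro y hy
      obtain ⟨hy0, hyc⟩ := hs y hy
      obtain ⟨hx0, hxc⟩ := hs x hx
      rcases quadAux hx0 hy0 (hxc.trans hyc.symm) with h' | h' <;> simp [h']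
    exact (Finset.card_le_card hsub).trans ((Finset.card_insert_le _ _).trans (by simp))

/-- For every nonzero element `a` of the subfield `F_{p^t}` of `F_q`,
`Σ_{x ∈ Δ} χ(ax) = -K_t(a²)`, where `K_t` is the Kloosterman sum over `F_{p^t}`. -/
theorem stmt0 (p t : ℕ) [Fact p.Prime] (ht : 2 < t)
    (E F : Type) [Field E] [Fintype E] [DecidableEq E] [Algebra (ZMod p) E]
    [Field F] [Fintype F] [DecidableEq F] [Algebra (ZMod p) F]
    (hE : Fintype.card E = p ^ t) (hF : Fintype.card F = p ^ (2 * t))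
    (ι : E →ₐ[ZMod p] F)
    (ζ : ℂ) (hζ : ζ = Complex.exp (2 * Real.pi * Complex.I / p))
    (χ : F → ℂ) (hχ : ∀ x, χ x = ζ ^ (Algebra.trace (ZMod p) F x).val)
    (K : E → ℂ)
    (hK : ∀ a : E, K a = ∑ x ∈ ({0}ᶜ : Finset E), ζ ^ (Algebra.trace (ZMod p) E (a * x + x⁻¹)).val)
    (Δ : Finset F) (hΔ : Δ = univ.filter (fun x : F => x ^ (p ^ t + 1) = 1))
    (a : E) (ha : a ≠ 0) :
    ∑ x ∈ Δ, χ (ι a * x) = - K (a ^ 2) := by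
  classical
  have hp : p.Prime := Fact.out
  have hpt1 : 1 < p ^ t := Nat.one_lt_pow (by omega) hp.one_lt
  haveI : CharP F p := charP_of_injective_algebraMap (algebraMap (ZMod p) F).injective p
  have hιinj : Function.Injective ι := ι.toRingHom.injective
  have hfix : ∀ w : E, (ι w) ^ (p ^ t) = ι w := by
    intro w; rw [← map_pow, ← hE, FiniteField.pow_card]
  have hSbound : (univ.filter (fun y : F => y ^ (p ^ t) = y)).card ≤ p ^ t := by
    set g : Polynomial F := Polynomial.X ^ (p ^ t) - Polynomial.X with hg
    have hdeg : g.natDegree = p ^ t := by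
      have hlt : (Polynomial.X : Polynomial F).natDegree
          < (Polynomial.X ^ (p ^ t) : Polynomial F).natDegree := by
        rw [Polynomial.natDegree_X_pow, Polynomial.natDegree_X]; omega
      rw [hg, Polynomial.natDegree_sub_eq_left_of_natDegree_lt hlt,
        Polynomial.natDegree_X_pow]
    have hgne : g ≠ 0 := by
      intro h0; rw [h0, Polynomial.natDegree_zero] at hdeg; omega
    have hsub : univ.filter (fun y : F => y ^ (p ^ t) = y) ⊆ g.roots.toFinset := by
      intro z hz
      simp only [mem_filter, mem_univ, true_and] at hz
      rw [Multiset.mem_toFinset, Polynomial.mem_roots hgne]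
      simp [hg, Polynomial.IsRoot, sub_eq_zero, hz]
    calc (univ.filter (fun y : F => y ^ (p ^ t) = y)).card
        ≤ g.roots.toFinset.card := card_le_card hsub
      _ ≤ Multiset.card g.roots := g.roots.toFinset_card_le
      _ ≤ g.natDegree := g.card_roots'
      _ = p ^ t := hdeg
  -- fixed set of Frobenius^t is exactly the range of ι
  have hrange : ∀ y : F, y ^ (p ^ t) = y → ∃ w, ι w = y := by
    intro y hy
    set Sfix : Finset F := univ.filter (fun y : F => y ^ (p ^ t) = y) with hSfix
    have h1 : (univ : Finset E).image ι ⊆ Sfix := by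
      intro z hz
      simp only [mem_image] at hz
      obtain ⟨w, _, rfl⟩ := hz
      simp [hSfix, hfix w]
    have hcard1 : ((univ : Finset E).image ι).card = p ^ t := by
      rw [Finset.card_image_of_injective _ hιinj, card_univ, hE]
    have hcard2 : Sfix.card ≤ p ^ t := hSbound
    have heq : (univ : Finset E).image ι = Sfix :=
      Finset.eq_of_subset_of_card_le h1 (by rw [hcard1]; exact hcard2)
    have hySfix : y ∈ Sfix := by simp [hSfix, hy]
    rw [← heq] at hySfix
    simpa [eq_comm] using Finset.mem_image.mp hySfix
  -- Algebra structure on F over E via ι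
  letI : Algebra E F := ι.toRingHom.toAlgebra
  haveI : IsScalarTower (ZMod p) E F :=
    IsScalarTower.of_algebraMap_eq (fun x => (ι.commutes x).symm)
  have halg : ∀ w : E, algebraMap E F w = ι w := fun w => rfl
  have hrank : Module.finrank E F = 2 := by
    have hcards : Fintype.card F = Fintype.card E ^ Module.finrank E F :=
      Module.card_eq_pow_finrank (K := E) (V := F)
    rw [hE, hF, ← pow_mul] at hcards
    have := Nat.pow_right_injective hp.two_le hcards
    have ht0 : t ≠ 0 := by omega
    exact (Nat.eq_of_mul_eq_mul_left (Nat.pos_of_ne_zero ht0)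
      (by omega : t * 2 = t * Module.finrank E F)).symm
  -- the Frobenius automorphism of order 2
  letI φ : F →ₐ[E] F :=
    { toRingHom := iterateFrobenius F p t
      commutes' := fun w => by simp only [halg, iterateFrobenius_def]; exact hfix w }
  have hφbij : Function.Bijective φ :=
    (Finite.injective_iff_bijective).mp φ.toRingHom.injective
  letI σ : F ≃ₐ[E] F := AlgEquiv.ofBijective φ hφbij
  have hσ : ∀ y : F, σ y = y ^ (p ^ t) := fun y => rfl
  have hσne : σ ≠ 1 := by
    intro hid
    have hall : ∀ y : F, y ^ (p ^ t) = y := by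
      intro y
      have h1 := hσ y
      rw [hid] at h1
      simpa using h1.symm
    have hsub : (univ : Finset F) ⊆ univ.filter (fun y : F => y ^ (p ^ t) = y) := by
      intro z _; simp [hall z]
    have hle := (Finset.card_le_card hsub).trans hSbound
    rw [card_univ, hF] at hle
    have : p ^ t < p ^ (2 * t) := Nat.pow_lt_pow_right hp.one_lt (by omega)
    omega
  have hautcard : Fintype.card (F ≃ₐ[E] F) = 2 := by
    rw [← Nat.card_eq_fintype_card, IsGalois.card_aut_eq_finrank, hrank]
  have huniv : (univ : Finset (F ≃ₐ[E] F)) = {1, σ} := by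
    symm
    apply Finset.eq_of_subset_of_card_le (Finset.subset_univ _)
    rw [Finset.card_univ, hautcard]
    rw [Finset.card_insert_of_notMem (by simpa using hσne.symm), Finset.card_singleton]
  have htr2 : ∀ y : F, ι (Algebra.trace E F y) = y + y ^ (p ^ t) := by
    intro y
    have h1 : algebraMap E F (Algebra.trace E F y) = ∑ τ : F ≃ₐ[E] F, τ y :=
      trace_eq_sum_automorphisms y
    rw [huniv, Finset.sum_pair hσne.symm] at h1
    rw [halg] at h1
    simpa [hσ] using h1
  have htrace : ∀ y : F, Algebra.trace (ZMod p) F y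
      = Algebra.trace (ZMod p) E (Algebra.trace E F y) := by
    intro y
    rw [Algebra.trace_trace]
  -- cardinality of Δ
  have hn1 : 0 < p ^ t + 1 := by omega
  have hdvd : p ^ t + 1 ∣ Fintype.card Fˣ := by
    rw [Fintype.card_units, hF]
    refine ⟨p ^ t - 1, ?_⟩
    have h1 : 1 ≤ p ^ t := hpt1.le
    have h2 : 1 ≤ p ^ (2 * t) := Nat.one_le_pow _ _ hp.pos
    zify [h1, h2]
    rw [two_mul, pow_add]
    push_cast
    ring
  obtain ⟨g, hg⟩ := IsCyclic.exists_ofOrder_eq_natCard (α := Fˣ)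
  have hgN : orderOf g = Fintype.card Fˣ := by rw [hg, Nat.card_eq_fintype_card]
  have hNpos : 0 < Fintype.card Fˣ := Fintype.card_pos
  have hxord : orderOf (g ^ (Fintype.card Fˣ / (p ^ t + 1))) = p ^ t + 1 := by
    rw [orderOf_pow, hgN, Nat.gcd_eq_right (Nat.div_dvd_of_dvd hdvd),
      Nat.div_div_self hdvd hNpos.ne']
  have hprim : IsPrimitiveRoot (((g ^ (Fintype.card Fˣ / (p ^ t + 1)) : Fˣ)) : F)
      (p ^ t + 1) := by
    have h0 := IsPrimitiveRoot.orderOf (((g ^ (Fintype.card Fˣ / (p ^ t + 1)) : Fˣ)) : F)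
    rwa [orderOf_units, hxord] at h0
  have hcardΔ : Δ.card = p ^ t + 1 := by
    have hΔeq : Δ = Polynomial.nthRootsFinset (p ^ t + 1) (1 : F) := by
      ext y
      rw [hΔ, Polynomial.mem_nthRootsFinset hn1]
      simp
    rw [hΔeq, hprim.card_nthRootsFinset]
  -- basic facts on Δ
  have hΔmem : ∀ x : F, x ∈ Δ ↔ x ^ (p ^ t + 1) = 1 := by intro x; rw [hΔ]; simp
  have hΔ0 : ∀ x ∈ Δ, x ≠ 0 := by
    intro x hx h0
    have := (hΔmem x).mp hx
    rw [h0] at this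
    simpa using this
  have hΔfrob : ∀ x ∈ Δ, x ^ (p ^ t) = x⁻¹ := by
    intro x hx
    have h1 := (hΔmem x).mp hx
    rw [pow_succ] at h1
    exact eq_inv_of_mul_eq_one_left h1
  have hΔinv : ∀ x ∈ Δ, (x + x⁻¹) ^ (p ^ t) = x + x⁻¹ := by
    intro x hx
    rw [add_pow_char_pow, hΔfrob x hx, inv_pow, hΔfrob x hx, inv_inv, add_comm]
  -- the "coordinate" map e : F → E
  have hex : ∀ x ∈ Δ, ∃ u : E, ι u = x + x⁻¹ := fun x hx => hrange _ (hΔinv x hx)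
  set e : F → E := fun x => if h : ∃ u : E, ι u = x + x⁻¹ then h.choose else 0 with he_def
  have he : ∀ x ∈ Δ, ι (e x) = x + x⁻¹ := by
    intro x hx
    rw [he_def]
    simp only [dif_pos (hex x hx)]
    exact (hex x hx).choose_spec
  have hfilterPre : True := trivial
  -- the fibers
  set DF : E → Finset F := fun u => Δ.filter (fun x => x + x⁻¹ = ι u) with hDF
  set EF : E → Finset E := fun u => ({0}ᶜ : Finset E).filter (fun w => w + w⁻¹ = u) with hEF
  have hfilter : ∀ u : E, Δ.filter (fun x => e x = u) = DF u := by
    intro u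
    rw [hDF]
    apply Finset.filter_congr
    intro x hx
    constructor
    · intro h1; rw [← h1]; exact (he x hx).symm
    · intro h1; exact hιinj (by rw [he x hx, h1])
  have hsumDF : ∑ u : E, (DF u).card = p ^ t + 1 := by
    rw [← hcardΔ]
    rw [Finset.card_eq_sum_card_fiberwise (fun x _ => Finset.mem_univ (e x))]
    exact Finset.sum_congr rfl (fun u _ => by rw [hfilter u])
  have hsumEF : ∑ u : E, (EF u).card = p ^ t - 1 := by
    have hc : ({0}ᶜ : Finset E).card = p ^ t - 1 := by
      simp [Finset.card_compl, hE]
    rw [← hc]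
    rw [Finset.card_eq_sum_card_fiberwise
      (fun (w : E) (_ : w ∈ ({0}ᶜ : Finset E)) => Finset.mem_univ (w + w⁻¹))]
  -- each combined fiber has at most two elements
  have hle2 : ∀ u : E, (DF u).card + (EF u).card ≤ 2 := by
    intro u
    have hDFmem' : ∀ x ∈ DF u, x ∈ Δ ∧ x + x⁻¹ = ι u := by
      intro x hx
      rw [hDF, Finset.mem_filter] at hx
      exact hx
    have hDFmem : ∀ x ∈ DF u, x ≠ 0 ∧ x + x⁻¹ = ι u := by
      intro x hx
      exact ⟨hΔ0 x (hDFmem' x hx).1, (hDFmem' x hx).2⟩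
    have hEFmem : ∀ w ∈ EF u, w ≠ 0 ∧ w + w⁻¹ = u := by
      intro w hw
      rw [hEF, Finset.mem_filter, Finset.mem_compl, Finset.mem_singleton] at hw
      exact ⟨hw.1, hw.2⟩
    rcases (DF u).eq_empty_or_nonempty with hD | ⟨x, hx⟩
    · rw [hD]
      simpa using quadCard hEFmem
    rcases (EF u).eq_empty_or_nonempty with hEe | ⟨w, hw⟩
    · rw [hEe]
      simpa using quadCard hDFmem
    -- both nonempty: the quadratic has a double root
    obtain ⟨hx0, hxc⟩ := hDFmem x hx
    obtain ⟨hw0, hwc⟩ := hEFmem w hw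
    have hxΔ : x ∈ Δ := (hDFmem' x hx).1
    have hιw0 : (ι w : F) ≠ 0 := fun h0 => hw0 (hιinj (by rw [h0, map_zero]))
    have hιwc : (ι w : F) + (ι w)⁻¹ = ι u := by rw [← map_inv₀, ← map_add, hwc]
    have hxfix : x = x⁻¹ := by
      rcases quadAux hx0 hιw0 (hxc.trans hιwc.symm) with h' | h'
      · -- ι w = x
        have : x ^ (p ^ t) = x := by rw [← h', hfix]
        rw [hΔfrob x hxΔ] at this
        exact this.symm
      · -- ι w = x⁻¹
        have h2 : (x⁻¹) ^ (p ^ t) = x⁻¹ := by rw [← h', hfix]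
        rw [inv_pow, hΔfrob x hxΔ, inv_inv] at h2
        exact h2
    have hιwx : (ι w : F) = x := by
      rcases quadAux hx0 hιw0 (hxc.trans hιwc.symm) with h' | h'
      · exact h'
      · rw [h', ← hxfix]
    have hDsub : DF u ⊆ {x} := by
      intro y hy
      obtain ⟨hy0, hyc⟩ := hDFmem y hy
      rcases quadAux hx0 hy0 (hxc.trans hyc.symm) with h' | h' <;>
        simp [h', ← hxfix]
    have hEsub : EF u ⊆ {w} := by
      intro v hv
      obtain ⟨hv0, hvc⟩ := hEFmem v hv
      have hιv0 : (ι v : F) ≠ 0 := fun h0 => hv0 (hιinj (by rw [h0, map_zero]))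
      have hιvc : (ι v : F) + (ι v)⁻¹ = ι u := by rw [← map_inv₀, ← map_add, hvc]
      have : (ι v : F) = ι w := by
        rcases quadAux hx0 hιv0 (hxc.trans hιvc.symm) with h' | h'
        · rw [h', hιwx]
        · rw [h', ← hxfix, hιwx]
      simp [hιinj this]
    calc (DF u).card + (EF u).card
        ≤ ({x} : Finset F).card + ({w} : Finset E).card :=
          Nat.add_le_add (Finset.card_le_card hDsub) (Finset.card_le_card hEsub)
      _ = 2 := by simp
  -- pigeonhole: every combined fiber has exactly two elements
  have hN2 : ∀ u : E, (DF u).card + (EF u).card = 2 := by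
    have hsum : ∑ u : E, ((DF u).card + (EF u).card) = ∑ u : E, 2 := by
      rw [Finset.sum_add_distrib, hsumDF, hsumEF, Finset.sum_const, card_univ, hE,
        smul_eq_mul]
      have h1 : 1 ≤ p ^ t := hpt1.le
      omega
    intro u
    exact (Finset.sum_eq_sum_iff_of_le (fun i _ => hle2 i)).mp hsum u (Finset.mem_univ u)
  -- the function g
  set G : E → ℂ := fun u => ζ ^ (Algebra.trace (ZMod p) E (a * u)).val with hG
  -- LHS as a fiberwise sum
  have htrval : ∀ x ∈ Δ, Algebra.trace (ZMod p) F (ι a * x)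
      = Algebra.trace (ZMod p) E (a * e x) := by
    intro x hx
    rw [htrace]
    congr 1
    have hsmul : (ι a : F) * x = a • x := by rw [Algebra.smul_def, halg]
    rw [hsmul, LinearMap.map_smul, smul_eq_mul]
    congr 1
    apply hιinj
    rw [htr2, hΔfrob x hx, he x hx]
  have hLHS : ∑ x ∈ Δ, χ (ι a * x) = ∑ u : E, ((DF u).card : ℂ) * G u := by
    have h1 : ∑ x ∈ Δ, χ (ι a * x) = ∑ x ∈ Δ, G (e x) := by
      refine Finset.sum_congr rfl (fun x hx => ?_)
      rw [hχ, htrval x hx]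
    rw [h1, ← Finset.sum_fiberwise_of_maps_to (fun x (_ : x ∈ Δ) => Finset.mem_univ (e x))
      (fun x => G (e x))]
    refine Finset.sum_congr rfl (fun u _ => ?_)
    rw [hfilter u]
    have hconst : ∀ x ∈ DF u, G (e x) = G u := by
      intro x hmem
      have hx' : x ∈ Δ ∧ x + x⁻¹ = ι u := by
        simp only [hDF, Finset.mem_filter] at hmem
        exact hmem
      have heu : e x = u := hιinj (by rw [he x hx'.1, hx'.2])
      rw [heu]
    rw [Finset.sum_congr rfl hconst, Finset.sum_const, nsmul_eq_mul]
  have hRHS : K (a ^ 2) = ∑ u : E, ((EF u).card : ℂ) * G u := by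
    rw [hK]
    have h1 : ∑ x ∈ ({0}ᶜ : Finset E), ζ ^ (Algebra.trace (ZMod p) E (a ^ 2 * x + x⁻¹)).val
        = ∑ w ∈ ({0}ᶜ : Finset E), G (w + w⁻¹) := by
      refine Finset.sum_nbij' (fun x => a * x) (fun w => a⁻¹ * w) ?_ ?_ ?_ ?_ ?_
      · intro x hx
        simp only [Finset.mem_compl, Finset.mem_singleton] at hx ⊢
        exact mul_ne_zero ha hx
      · intro w hw
        simp only [Finset.mem_compl, Finset.mem_singleton] at hw ⊢
        exact mul_ne_zero (inv_ne_zero ha) hw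
      · intro x _
        show a⁻¹ * (a * x) = x
        rw [inv_mul_cancel_left₀ ha]
      · intro w _
        show a * (a⁻¹ * w) = w
        rw [mul_inv_cancel_left₀ ha]
      · intro x hx
        simp only [Finset.mem_compl, Finset.mem_singleton] at hx
        have h2 : a ^ 2 * x + x⁻¹ = a * (a * x + (a * x)⁻¹) := by
          field_simp
        show _ = ζ ^ (Algebra.trace (ZMod p) E (a * (a * x + (a * x)⁻¹))).val
        rw [← h2]
    rw [h1, ← Finset.sum_fiberwise_of_maps_to
      (fun (w : E) (_ : w ∈ ({0}ᶜ : Finset E)) => Finset.mem_univ (w + w⁻¹))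
      (fun w => G (w + w⁻¹))]
    refine Finset.sum_congr rfl (fun u _ => ?_)
    rw [Finset.sum_congr rfl (fun w hw => by
      rw [(Finset.mem_filter.mp hw).2] : ∀ w ∈ ({0}ᶜ : Finset E).filter (fun w => w + w⁻¹ = u),
        G (w + w⁻¹) = G u)]
    rw [Finset.sum_const, nsmul_eq_mul]
  have hGsum : ∑ u : E, G u = 0 := by
    haveI : NeZero p := ⟨hp.ne_zero⟩
    have hprimζ : IsPrimitiveRoot ζ p := by
      rw [hζ]; exact Complex.isPrimitiveRoot_exp p hp.ne_zero
    set ψ : AddChar E ℂ :=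
      (AddChar.zmodChar p hprimζ.pow_eq_one).compAddMonoidHom
        (Algebra.trace (ZMod p) E).toAddMonoidHom with hψdef
    have hψ : ∀ v : E, ψ v = ζ ^ (Algebra.trace (ZMod p) E v).val := by
      intro v
      rw [hψdef, AddChar.compAddMonoidHom_apply, AddChar.zmodChar_apply]
      rfl
    have hψne : ψ ≠ 1 := by
      intro hone
      have hall : ∀ b : E, ψ b = 1 := fun b => by rw [hone]; rfl
      have htr0 : ∀ b : E, Algebra.trace (ZMod p) E b = 0 := by
        intro b
        by_contra hb
        exact hprimζ.pow_ne_one_of_pos_of_lt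
          (fun h0 => hb ((ZMod.val_eq_zero _).mp h0)) (ZMod.val_lt _)
          (by rw [← hψ b]; exact hall b)
      have h10 : (1 : E) = 0 :=
        (traceForm_nondegenerate (ZMod p) E).1 1
          (fun b => by rw [Algebra.traceForm_apply, one_mul]; exact htr0 b)
      exact one_ne_zero h10
    calc ∑ u : E, G u = ∑ u : E, ψ (a * u) := by
          refine Finset.sum_congr rfl (fun u _ => ?_)
          rw [hψ, hG]
      _ = ∑ v : E, ψ v :=
          Fintype.sum_bijective _ (Equiv.mulLeft₀ a ha).bijective _ _ (fun u => rfl)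
      _ = 0 := AddChar.sum_eq_zero_of_ne_one hψne
  have hfinal : (∑ x ∈ Δ, χ (ι a * x)) + K (a ^ 2) = 0 := by
    rw [hLHS, hRHS, ← Finset.sum_add_distrib]
    have : ∀ u : E, ((DF u).card : ℂ) * G u + ((EF u).card : ℂ) * G u = 2 * G u := by
      intro u
      rw [← add_mul]
      congr 1
      rw [← Nat.cast_add, hN2 u]
      norm_num
    rw [Finset.sum_congr rfl (fun u _ => this u), ← Finset.mul_sum, hGsum, mul_zero]
  linear_combination hfinal
end

section
/- For every a ∈ F_q^* there is exactly one element v ∈ Γ such that Tr_{q/t}(av) = 0. -/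
open Finset

set_option synthInstance.maxHeartbeats 1000000
set_option maxHeartbeats 2000000

/-- For every `a ∈ F_q^*` there is exactly one element `v ∈ Γ`
with `Tr_{q/t}(av) = 0`. -/
theorem stmt1 (p t m : ℕ) [Fact p.Prime] (ht : 2 < t) (hm : m = 2 * t)
    (F : Type) [Field F] [Fintype F] [DecidableEq F] [Algebra (ZMod p) F]
    (hF : Fintype.card F = p ^ m)
    (E : Subfield F) (hE : Nat.card E = p ^ t)
    (α : Fˣ) (hα : ∀ x : Fˣ, x ∈ Subgroup.zpowers α)
    (Γ : Set F) (hΓ : Γ = {v : F | ∃ j ≤ p ^ t, v = (α : F) ^ j})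
    (a : F) (ha : a ≠ 0) :
    ∃! v : F, v ∈ Γ ∧ Algebra.trace E F (a * v) = 0 := by
  classical
  have hp := (Fact.out : p.Prime)
  have hn2 : 2 ≤ p ^ t := by
    calc 2 ≤ p := hp.two_le
    _ = p ^ 1 := (pow_one p).symm
    _ ≤ p ^ t := Nat.pow_le_pow_right hp.pos (by omega)
  haveI : Fintype E := Fintype.ofFinite E
  have hcardE : Fintype.card E = p ^ t := by rw [← Nat.card_eq_fintype_card]; exact hE
  have hrank : Module.finrank E F = 2 := by
    have h := Module.card_eq_pow_finrank (K := E) (V := F)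
    rw [hF, hcardE, hm, mul_comm, pow_mul] at h
    exact (Nat.pow_right_injective hn2 h).symm
  have hτne : Algebra.trace E F ≠ 0 := Algebra.trace_ne_zero E F
  have hτsurj : Function.Surjective (Algebra.trace E F) := by
    obtain ⟨x, hx⟩ : ∃ x, Algebra.trace E F x ≠ 0 := by
      by_contra h; push_neg at h; exact hτne (LinearMap.ext h)
    intro c
    exact ⟨(c / Algebra.trace E F x) • x, by
      rw [map_smul, smul_eq_mul, div_mul_cancel₀ _ hx]⟩
  have hker : Module.finrank E (LinearMap.ker (Algebra.trace E F)) = 1 := by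
    have h := LinearMap.finrank_range_add_finrank_ker (Algebra.trace E F)
    rw [hrank, LinearMap.range_eq_top.mpr hτsurj, finrank_top, Module.finrank_self] at h
    omega
  obtain ⟨u', hu'0, hu'span⟩ := finrank_eq_one_iff'.mp hker
  set u : F := (u' : F) with hu
  have hu0 : u ≠ 0 := fun h => hu'0 (Subtype.ext h)
  have hutrace : Algebra.trace E F u = 0 := u'.2
  have hkermem : ∀ x : F, Algebra.trace E F x = 0 ↔ ∃ c : E, x = (c : F) * u := by
    intro x
    constructor
    · intro hx
      obtain ⟨c, hc⟩ := hu'span ⟨x, hx⟩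
      refine ⟨c, ?_⟩
      have := congrArg (fun z : LinearMap.ker (Algebra.trace E F) => (z : F)) hc
      simp only [SetLike.val_smul] at this
      rw [← this, Subfield.smul_def, smul_eq_mul]
    · rintro ⟨c, rfl⟩
      have : (c : F) * u = c • u := by rw [Subfield.smul_def, smul_eq_mul]
      rw [this, map_smul, hutrace, smul_zero]
  -- membership criterion for E
  have hmemE : ∀ y : F, y ≠ 0 → (y ∈ E ↔ y ^ (p ^ t - 1) = 1) := by
    intro y hy
    constructor
    · intro hyE
      have h1 : (⟨y, hyE⟩ : E) ≠ 0 := fun h => hy (by simpa using congrArg Subtype.val h)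
      have h2 := FiniteField.pow_card_sub_one_eq_one (⟨y, hyE⟩ : E) h1
      rw [hcardE] at h2
      have := congrArg (fun z : E => (z : F)) h2
      simpa using this
    · intro hpow
      have hn1 : 0 < p ^ t - 1 := by omega
      set S : Finset F := univ.filter (fun z => z ^ (p ^ t - 1) = 1) with hS
      set T : Finset F := ((univ : Finset F).filter (fun z => z ∈ E)).erase 0 with hT
      have hTS : T ⊆ S := by
        intro z hz
        rw [hT, Finset.mem_erase, Finset.mem_filter] at hz
        rw [hS, Finset.mem_filter]
        refine ⟨mem_univ _, ?_⟩
        have h1 : (⟨z, hz.2.2⟩ : E) ≠ 0 :=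
          fun h => hz.1 (by simpa using congrArg Subtype.val h)
        have h2 := FiniteField.pow_card_sub_one_eq_one (⟨z, hz.2.2⟩ : E) h1
        rw [hcardE] at h2
        have := congrArg (fun z : E => (z : F)) h2
        simpa using this
      have hScard : S.card ≤ p ^ t - 1 := by
        have hsub : S ⊆ (Polynomial.nthRoots (p ^ t - 1) (1 : F)).toFinset := by
          intro z hz
          rw [hS, Finset.mem_filter] at hz
          rw [Multiset.mem_toFinset, Polynomial.mem_nthRoots hn1]
          exact hz.2
        calc S.card ≤ (Polynomial.nthRoots (p ^ t - 1) (1 : F)).toFinset.card :=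
              Finset.card_le_card hsub
          _ ≤ Multiset.card (Polynomial.nthRoots (p ^ t - 1) (1 : F)) := Multiset.toFinset_card_le _
          _ ≤ p ^ t - 1 := Polynomial.card_nthRoots _ _
      have hTcard : T.card = p ^ t - 1 := by
        rw [hT, Finset.card_erase_of_mem (by simp [Subfield.zero_mem])]
        have h3 := Fintype.card_of_subtype (p := fun x => x ∈ E)
          ((univ : Finset F).filter (fun z => z ∈ E)) (fun x => by simp)
        rw [show (((univ : Finset F).filter (fun z => z ∈ E)).card) = Fintype.card E from h3.symm,
          hcardE]
      have hST : T = S := Finset.eq_of_subset_of_card_le hTS (by omega)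
      have hyS : y ∈ S := by rw [hS, Finset.mem_filter]; exact ⟨mem_univ _, hpow⟩
      rw [← hST, hT, Finset.mem_erase, Finset.mem_filter] at hyS
      exact hyS.2.2
  -- units and order
  have hcardU : Fintype.card Fˣ = p ^ m - 1 := by rw [Fintype.card_units, hF]
  have hordα : orderOf α = p ^ m - 1 := by
    rw [orderOf_eq_card_of_forall_mem_zpowers hα, Nat.card_eq_fintype_card, hcardU]
  have hfact : p ^ m - 1 = (p ^ t + 1) * (p ^ t - 1) := by
    have hpm : p ^ m = p ^ t * p ^ t := by rw [hm, two_mul, pow_add]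
    have h2 : (p ^ t + 1) * (p ^ t - 1) + 1 = p ^ t * p ^ t := by
      obtain ⟨d, hd⟩ : ∃ d, p ^ t = d + 2 := ⟨p ^ t - 2, by omega⟩
      rw [hd]
      have : d + 2 - 1 = d + 1 := by omega
      rw [this]; ring
    omega
  set αF : F := ((α : Fˣ) : F) with hαF
  have hαF0 : ∀ j : ℕ, αF ^ j ≠ 0 := fun j => pow_ne_zero j (Units.ne_zero α)
  have hcrit : ∀ y : F, y ≠ 0 →
      (Algebra.trace E F y = 0 ↔ (y * u⁻¹) ^ (p ^ t - 1) = 1) := by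
    intro y hy
    rw [hkermem]
    have hyu : y * u⁻¹ ≠ 0 := mul_ne_zero hy (inv_ne_zero hu0)
    rw [← hmemE _ hyu]
    constructor
    · rintro ⟨c, rfl⟩
      have hcu : (c : F) * u * u⁻¹ = (c : F) := by field_simp
      rw [hcu]; exact c.2
    · intro h
      exact ⟨⟨y * u⁻¹, h⟩, by field_simp⟩
  obtain ⟨k, hk⟩ : ∃ k : ℕ, α ^ k = Units.mk0 a ha * (Units.mk0 u hu0)⁻¹ :=
    mem_powers_iff_mem_zpowers.mpr (hα _)
  have hiff : ∀ j : ℕ, (Algebra.trace E F (a * αF ^ j) = 0 ↔ (p ^ t + 1) ∣ (k + j)) := by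
    intro j
    rw [hcrit _ (mul_ne_zero ha (hαF0 j))]
    have hval : a * αF ^ j * u⁻¹ = ((α ^ (k + j) : Fˣ) : F) := by
      have : ((α ^ (k + j) : Fˣ) : F) = a * u⁻¹ * αF ^ j := by
        rw [pow_add, hk]
        simp [Units.val_mul, Units.val_inv_eq_inv_val]
        exact Or.inl rfl
      rw [this]; ring
    rw [hval, ← Units.val_pow_eq_pow_val, ← pow_mul, Units.val_eq_one,
      ← orderOf_dvd_iff_pow_eq_one, hordα, hfact,
      mul_comm (p ^ t + 1) (p ^ t - 1)]
    rw [show (k + j) * (p ^ t - 1) = (k + j) * (p ^ t - 1) from rfl]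
    rw [mul_comm (k + j) (p ^ t - 1)]
    rw [mul_comm (p ^ t - 1) (p ^ t + 1), mul_comm (p ^ t - 1) (k + j)]
    exact Nat.mul_dvd_mul_iff_right (by omega : 0 < p ^ t - 1)
  -- choose j0
  have hrlt : k % (p ^ t + 1) < p ^ t + 1 := Nat.mod_lt _ (by omega)
  have hre : (p ^ t + 1) * (k / (p ^ t + 1)) + k % (p ^ t + 1) = k :=
    Nat.div_add_mod k (p ^ t + 1)
  set r := k % (p ^ t + 1) with hr
  set j0 := if r = 0 then 0 else p ^ t + 1 - r with hj0
  have hj0le : j0 ≤ p ^ t := by rw [hj0]; split_ifs <;> omega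
  have hj0dvd : (p ^ t + 1) ∣ (k + j0) := by
    rw [hj0]; split_ifs with h0
    · exact ⟨k / (p ^ t + 1), by omega⟩
    · refine ⟨k / (p ^ t + 1) + 1, ?_⟩
      have : (p ^ t + 1) * (k / (p ^ t + 1) + 1)
          = (p ^ t + 1) * (k / (p ^ t + 1)) + (p ^ t + 1) := by ring
      omega
  have huniq : ∀ j1 j2 : ℕ, j1 ≤ p ^ t → j2 ≤ p ^ t →
      (p ^ t + 1) ∣ (k + j1) → (p ^ t + 1) ∣ (k + j2) → j1 = j2 := by
    intro j1 j2 h1 h2 d1 d2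
    have e1 : (p ^ t + 1) ∣ (k + j2) - (k + j1) := Nat.dvd_sub d2 d1
    have e2 : (p ^ t + 1) ∣ (k + j1) - (k + j2) := Nat.dvd_sub d1 d2
    have s1 : (k + j2) - (k + j1) = j2 - j1 := by omega
    have s2 : (k + j1) - (k + j2) = j1 - j2 := by omega
    rw [s1] at e1; rw [s2] at e2
    have z1 := Nat.eq_zero_of_dvd_of_lt e1 (by omega)
    have z2 := Nat.eq_zero_of_dvd_of_lt e2 (by omega)
    omega
  refine ⟨αF ^ j0, ⟨?_, ?_⟩, ?_⟩
  · rw [hΓ]; exact ⟨j0, hj0le, rfl⟩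
  · exact (hiff j0).mpr hj0dvd
  · rintro v ⟨hvΓ, hvtr⟩
    rw [hΓ] at hvΓ
    obtain ⟨j, hjle, rfl⟩ := hvΓ
    have hd := (hiff j).mp hvtr
    rw [huniq j j0 hjle hj0le hd hj0dvd]
end

section
/- For every pair (a,b) ∈ (F_q × F_q) \ {(0,0)} such that a is not a nonzero element of the prime subfield F_p, one has N(a,b) = p^{2m−2} − 1. -/
open Finset

/-- Fibers of a surjective additive hom between finite groups all have the
same cardinality. -/
lemma fiber_card_mul {V W : Type*} [AddCommGroup V] [AddCommGroup W]
    [Fintype V] [Fintype W] [DecidableEq V] [DecidableEq W]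
    (f : V →+ W) (hf : Function.Surjective f) (w : W) :
    (univ.filter fun v => f v = w).card * Fintype.card W = Fintype.card V := by
  classical
  have key : ∀ w : W, (univ.filter fun v => f v = w).card
      = (univ.filter fun v => f v = 0).card := by
    intro w
    obtain ⟨v₀, hv₀⟩ := hf w
    apply Finset.card_bij (fun v _ => v - v₀)
    · intro v hv
      simp only [mem_filter, mem_univ, true_and] at hv ⊢
      rw [map_sub, hv, hv₀, sub_self]
    · intro v₁ h₁ v₂ h₂ h
      exact sub_left_injective h
    · intro u hu
      refine ⟨u + v₀, ?_, by abel⟩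
      simp only [mem_filter, mem_univ, true_and] at hu ⊢
      rw [map_add, hu, hv₀, zero_add]
  have total : Fintype.card V = ∑ w : W, (univ.filter fun v => f v = w).card := by
    rw [← Finset.card_univ]
    exact Finset.card_eq_sum_card_fiberwise (fun x _ => mem_univ _)
  rw [key w, total]
  rw [Finset.sum_congr rfl (fun w _ => key w), Finset.sum_const, Finset.card_univ,
    smul_eq_mul, mul_comm]

/-- For every pair `(a,b) ≠ (0,0)` such that `a` is not a nonzero element
of the prime subfield `F_p`, one has `N(a,b) = p^{2m-2} - 1`. -/
theorem stmt3 (p t m : ℕ) [Fact p.Prime] (ht : 2 < t) (hm : m = 2 * t)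
    (F : Type) [Field F] [Fintype F] [DecidableEq F] [Algebra (ZMod p) F]
    (hF : Fintype.card F = p ^ m)
    (N : F → F → ℕ)
    (hN : ∀ a b : F, N a b = Set.ncard {xy : F × F | xy ≠ (0, 0) ∧
      Algebra.trace (ZMod p) F (xy.1 + xy.2 ^ (p ^ t - 1)) = 0 ∧
      Algebra.trace (ZMod p) F (a * xy.1 + b * xy.2) = 0})
    (a b : F) (hab : (a, b) ≠ (0, 0))
    (ha : ¬ ∃ z : ZMod p, z ≠ 0 ∧ algebraMap (ZMod p) F z = a) :
    N a b = p ^ (2 * m - 2) - 1 := by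
  classical
  have hp : p.Prime := Fact.out
  haveI : NeZero p := ⟨hp.ne_zero⟩
  have hp2 : 2 ≤ p := hp.two_le
  have hm6 : 6 ≤ m := by omega
  set Tr := Algebra.trace (ZMod p) F with hTrdef
  have hTrsurj : Function.Surjective Tr := Algebra.trace_surjective (ZMod p) F
  have hnondeg : ∀ c : F, (∀ x : F, Tr (c * x) = 0) → c = 0 := by
    intro c hc
    exact (traceForm_nondegenerate (ZMod p) F).1 c
      (fun x => by simpa [Algebra.traceForm_apply] using hc x)
  have hcardZ2 : Fintype.card (ZMod p × ZMod p) = p ^ 2 := by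
    simp [ZMod.card]; ring
  have hexp : p ^ t - 1 ≠ 0 := by
    have : 1 < p ^ t := Nat.one_lt_pow (by omega) (by omega)
    omega
  -- trace-of-scalar fibers have size p^(m-1)
  have hTrfiber : ∀ w : ZMod p,
      (univ.filter fun x : F => Tr x = w).card = p ^ (m - 1) := by
    intro w
    have := fiber_card_mul (Tr : F →ₗ[ZMod p] ZMod p).toAddMonoidHom hTrsurj w
    simp only [LinearMap.toAddMonoidHom_coe, ZMod.card] at this
    have h2 : p ^ (m - 1) * p = p ^ m := by
      rw [← pow_succ]; congr 1; omega
    apply Nat.eq_of_mul_eq_mul_right (show 0 < p by omega)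
    rw [h2, ← hF]; exact this
  -- main count as a fiberwise sum
  rw [hN]
  have hset : {xy : F × F | xy ≠ (0, 0) ∧
      Tr (xy.1 + xy.2 ^ (p ^ t - 1)) = 0 ∧ Tr (a * xy.1 + b * xy.2) = 0}
      = ↑(((univ : Finset (F × F)).filter fun xy =>
        Tr (xy.1 + xy.2 ^ (p ^ t - 1)) = 0 ∧ Tr (a * xy.1 + b * xy.2) = 0).erase (0, 0)) := by
    ext xy
    simp only [Set.mem_setOf_eq, Finset.coe_erase, Set.mem_diff, Finset.mem_coe,
      Finset.mem_filter, Finset.mem_univ, true_and, Set.mem_singleton_iff]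
    tauto
  rw [hset, Set.ncard_coe_finset, Finset.card_erase_of_mem (by
    simp only [Finset.mem_filter, Finset.mem_univ, true_and]
    constructor <;> simp [zero_pow hexp])]
  suffices h : ((univ : Finset (F × F)).filter fun xy =>
      Tr (xy.1 + xy.2 ^ (p ^ t - 1)) = 0 ∧ Tr (a * xy.1 + b * xy.2) = 0).card
      = p ^ (2 * m - 2) by rw [h]
  have hsplit : ((univ : Finset (F × F)).filter fun xy =>
      Tr (xy.1 + xy.2 ^ (p ^ t - 1)) = 0 ∧ Tr (a * xy.1 + b * xy.2) = 0).card
      = ∑ y : F, (univ.filter fun x : F =>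
        Tr (x + y ^ (p ^ t - 1)) = 0 ∧ Tr (a * x + b * y) = 0).card := by
    rw [Finset.card_filter, Fintype.sum_prod_type, Finset.sum_comm]
    exact Finset.sum_congr rfl fun y _ => (Finset.card_filter _ _).symm
  rw [hsplit]
  by_cases ha0 : a = 0
  · -- case a = 0, b ≠ 0
    have hb : b ≠ 0 := by
      rintro rfl
      exact hab (by rw [ha0])
    subst ha0
    -- fiber count for y ↦ Tr (b * y)
    have hbsurj : Function.Surjective (fun y : F => Tr (b * y)) := by
      intro w
      obtain ⟨x, hx⟩ := hTrsurj w
      refine ⟨b⁻¹ * x, ?_⟩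
      show Tr (b * (b⁻¹ * x)) = w
      rw [← mul_assoc, mul_inv_cancel₀ hb, one_mul, hx]
    have hbhom : ∀ w : ZMod p,
        (univ.filter fun y : F => Tr (b * y) = w).card = p ^ (m - 1) := by
      intro w
      have hadd : ∀ y z : F, Tr (b * (y + z)) = Tr (b * y) + Tr (b * z) := by
        intro y z; rw [mul_add, map_add]
      have h0 := fiber_card_mul (AddMonoidHom.mk' (fun y : F => Tr (b * y)) hadd) hbsurj w
      have h1 : (univ.filter fun y : F => Tr (b * y) = w).card * Fintype.card (ZMod p)
          = Fintype.card F := h0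
      rw [ZMod.card, hF] at h1
      have h2 : p ^ (m - 1) * p = p ^ m := by rw [← pow_succ]; congr 1; omega
      apply Nat.eq_of_mul_eq_mul_right (show 0 < p by omega)
      rw [h1, h2]
    have hinner : ∀ y : F, (univ.filter fun x : F =>
        Tr (x + y ^ (p ^ t - 1)) = 0 ∧ Tr (0 * x + b * y) = 0).card
        = if Tr (b * y) = 0 then p ^ (m - 1) else 0 := by
      intro y
      by_cases hy : Tr (b * y) = 0
      · rw [if_pos hy]
        have : (univ.filter fun x : F =>
            Tr (x + y ^ (p ^ t - 1)) = 0 ∧ Tr (0 * x + b * y) = 0)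
            = univ.filter fun x : F => Tr x = -Tr (y ^ (p ^ t - 1)) := by
          ext x
          simp only [Finset.mem_filter, Finset.mem_univ, true_and, zero_mul, zero_add,
            map_add, add_eq_zero_iff_eq_neg, hy, and_true]
        rw [this, hTrfiber]
      · rw [if_neg hy]
        rw [Finset.card_eq_zero, Finset.filter_eq_empty_iff]
        intro x _
        simp only [zero_mul, zero_add]
        tauto
    rw [Finset.sum_congr rfl fun y _ => hinner y]
    rw [← Finset.sum_filter, Finset.sum_const, hbhom 0, smul_eq_mul, ← pow_add]
    congr 1
    omega
  · -- case a ∉ ZMod p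
    have ha' : ∀ z : ZMod p, algebraMap (ZMod p) F z ≠ a := by
      intro z hz
      rcases eq_or_ne z 0 with rfl | hz0
      · exact ha0 (by rw [← hz, map_zero])
      · exact ha ⟨z, hz0, hz⟩
    have hadd : ∀ x y : F, ((Tr (x + y), Tr (a * (x + y))) : ZMod p × ZMod p)
        = (Tr x, Tr (a * x)) + (Tr y, Tr (a * y)) := by
      intro x y
      rw [Prod.mk_add_mk, mul_add, map_add, map_add]
    set f : F →+ ZMod p × ZMod p :=
      AddMonoidHom.mk' (fun x : F => (Tr x, Tr (a * x))) hadd with hfdef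
    have hfapp : ∀ x : F, f x = (Tr x, Tr (a * x)) := fun x => rfl
    have hfs : Function.Surjective f := by
      obtain ⟨e, he⟩ := hTrsurj 1
      by_cases h : ∀ x : F, Tr x = 0 → Tr (a * x) = 0
      · exfalso
        set z := Tr (a * e) with hz
        have key : ∀ x : F, Tr ((a - algebraMap (ZMod p) F z) * x) = 0 := by
          intro x
          have h1 : Tr (x - Tr x • e) = 0 := by
            rw [map_sub, map_smul, he, smul_eq_mul, mul_one, sub_self]
          have h2 := h _ h1
          rw [mul_sub, map_sub, mul_smul_comm, map_smul, smul_eq_mul, sub_eq_zero] at h2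
          rw [sub_mul, map_sub, h2, ← Algebra.smul_def, map_smul, smul_eq_mul, mul_comm]
          rw [sub_self]
        have := hnondeg _ key
        exact ha' z (by rw [← sub_eq_zero]; rw [← neg_sub, this, neg_zero])
      · push_neg at h
        obtain ⟨x₀, hx₀, hax₀⟩ := h
        rintro ⟨u, v⟩
        refine ⟨u • e + ((v - u * Tr (a * e)) * (Tr (a * x₀))⁻¹) • x₀, ?_⟩
        rw [hfapp]
        have e1 : Tr (u • e + ((v - u * Tr (a * e)) * (Tr (a * x₀))⁻¹) • x₀) = u := by
          rw [map_add, map_smul, map_smul, he, hx₀, smul_eq_mul, smul_eq_mul,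
            mul_one, mul_zero, add_zero]
        have e2 : Tr (a * (u • e + ((v - u * Tr (a * e)) * (Tr (a * x₀))⁻¹) • x₀)) = v := by
          rw [mul_add, map_add, mul_smul_comm, mul_smul_comm, map_smul, map_smul,
            smul_eq_mul, smul_eq_mul, mul_assoc, inv_mul_cancel₀ hax₀, mul_one]
          ring
        rw [e1, e2]
    have hfiber2 : ∀ w : ZMod p × ZMod p,
        (univ.filter fun x : F => f x = w).card = p ^ (m - 2) := by
      intro w
      have h0 := fiber_card_mul f hfs w
      rw [hcardZ2, hF] at h0
      have h2 : p ^ (m - 2) * p ^ 2 = p ^ m := by rw [← pow_add]; congr 1; omega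
      apply Nat.eq_of_mul_eq_mul_right (show 0 < p ^ 2 by positivity)
      rw [h0, h2]
    have hinner : ∀ y : F, (univ.filter fun x : F =>
        Tr (x + y ^ (p ^ t - 1)) = 0 ∧ Tr (a * x + b * y) = 0).card = p ^ (m - 2) := by
      intro y
      have : (univ.filter fun x : F =>
          Tr (x + y ^ (p ^ t - 1)) = 0 ∧ Tr (a * x + b * y) = 0)
          = univ.filter fun x : F =>
            f x = (-Tr (y ^ (p ^ t - 1)), -Tr (b * y)) := by
        ext x
        simp only [Finset.mem_filter, Finset.mem_univ, true_and, map_add,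
          add_eq_zero_iff_eq_neg, hfapp, Prod.mk.injEq]
      rw [this, hfiber2]
    rw [Finset.sum_congr rfl fun y _ => hinner y, Finset.sum_const, Finset.card_univ,
      hF, smul_eq_mul, ← pow_add]
    congr 1
    omega
end

section
/- For every nonzero element a of the prime subfield F_p ⊆ F_q, one has N(a,0) = p^{2m−2} − 1 + p^{m−2}(p−1) + p^{m−2}(p^t − 1)·S. -/
open Finset

set_option linter.unusedSectionVars false in
lemma aux_trace_surj {p : ℕ} [Fact p.Prime] {F : Type} [Field F] [Fintype F]
    [DecidableEq F] [Algebra (ZMod p) F] :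
    Function.Surjective (Algebra.trace (ZMod p) F) := by
  obtain ⟨b, hb⟩ : ∃ b : F, Algebra.trace (ZMod p) F b ≠ 0 := by
    have hchar : ringChar F = p := by
      have : CharP F p := charP_of_injective_algebraMap
        (algebraMap (ZMod p) F).injective p
      exact ringChar.eq F p
    subst hchar
    obtain ⟨b, hb⟩ := FiniteField.trace_to_zmod_nondegenerate F (one_ne_zero (α := F))
    exact ⟨b, by simpa using hb⟩
  intro c
  refine ⟨(c * (Algebra.trace (ZMod p) F b)⁻¹) • b, ?_⟩
  rw [map_smul, smul_eq_mul, mul_assoc, inv_mul_cancel₀ hb, mul_one]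

lemma aux_card_ker {p : ℕ} [Fact p.Prime] {F : Type} [Field F] [Fintype F]
    [DecidableEq F] [Algebra (ZMod p) F] {m : ℕ}
    (hm : Fintype.card F = p ^ m) (hm1 : 1 ≤ m) :
    (univ.filter fun x : F => Algebra.trace (ZMod p) F x = 0).card = p ^ (m - 1) := by
  set τ := Algebra.trace (ZMod p) F with hτ
  have hfib : ∀ c : ZMod p,
      (univ.filter fun x : F => τ x = c).card
        = (univ.filter fun x : F => τ x = 0).card := by
    intro c
    obtain ⟨xc, hxc⟩ := aux_trace_surj (F := F) c
    refine Finset.card_nbij' (fun y => y - xc) (fun y => y + xc) ?_ ?_ ?_ ?_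
    · intro a ha
      simp only [mem_coe, mem_filter, mem_univ, true_and] at ha ⊢
      rw [map_sub, ha, hxc, sub_self]
    · intro a ha
      simp only [mem_coe, mem_filter, mem_univ, true_and] at ha ⊢
      rw [map_add, ha, hxc, zero_add]
    · intro a _; ring
    · intro a _; ring
  have htot : (univ : Finset F).card
      = ∑ c : ZMod p, (univ.filter fun x : F => τ x = c).card :=
    Finset.card_eq_sum_card_fiberwise (fun x _ => mem_univ _)
  rw [Finset.card_univ, hm] at htot
  simp only [hfib] at htot
  rw [Finset.sum_const, Finset.card_univ, ZMod.card, smul_eq_mul] at htot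
  have hp : 0 < p := (Fact.out (p := p.Prime)).pos
  have hpow : p ^ m = p * p ^ (m - 1) := by
    rw [← pow_succ']
    congr 1
    omega
  rw [hpow] at htot
  exact (Nat.eq_of_mul_eq_mul_left hp htot.symm)

lemma aux_prim {F : Type} [Field F] [Fintype F] [DecidableEq F] {n : ℕ}
    (hn : n ∣ Fintype.card F - 1) : ∃ ξ : F, IsPrimitiveRoot ξ n := by
  obtain ⟨g, hg⟩ := IsCyclic.exists_generator (α := Fˣ)
  have hord : orderOf g = Fintype.card F - 1 := by
    rw [orderOf_eq_card_of_forall_mem_zpowers hg, Nat.card_eq_fintype_card,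
      Fintype.card_units]
  obtain ⟨e, he⟩ := hn
  have he0 : 0 < e := by
    rcases Nat.eq_zero_or_pos e with rfl | h
    · have h2 : 2 ≤ Fintype.card F := Fintype.one_lt_card
      omega
    · exact h
  refine ⟨((g ^ e : Fˣ) : F), ?_⟩
  rw [IsPrimitiveRoot.coe_units_iff]
  have : orderOf (g ^ e) = n := by
    rw [orderOf_pow, hord, he, Nat.gcd_eq_right ⟨n, mul_comm n e⟩,
      Nat.mul_div_cancel _ he0]
  exact this ▸ IsPrimitiveRoot.orderOf _

lemma aux_fiber {F : Type} [Field F] [Fintype F] [DecidableEq F] {d : ℕ} (hd : 0 < d)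
    {ξ α u : F} (hξ : IsPrimitiveRoot ξ d) (hα : α ^ d = u) (hu : u ≠ 0) :
    (univ.filter fun y : F => y ^ d = u).card = d := by
  have hαne : α ≠ 0 := fun h => hu (by rw [← hα, h, zero_pow hd.ne'])
  have hset : (univ.filter fun y : F => y ^ d = u)
      = (Finset.range d).image fun i => ξ ^ i * α := by
    ext y
    simp only [mem_filter, mem_univ, true_and, mem_image, mem_range]
    constructor
    · intro hy
      have hmem : y ∈ Polynomial.nthRoots d u := (Polynomial.mem_nthRoots hd).2 hy
      rw [hξ.nthRoots_eq hα] at hmem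
      simpa using hmem
    · rintro ⟨i, _, rfl⟩
      rw [mul_pow, ← pow_mul, mul_comm i d, pow_mul, hξ.pow_eq_one, one_pow, one_mul, hα]
  rw [hset, Finset.card_image_of_injOn, Finset.card_range]
  intro i hi j hj hij
  simp only [Finset.coe_range, Set.mem_Iio] at hi hj
  exact hξ.pow_inj hi hj (mul_right_cancel₀ hαne hij)

lemma aux_exists_root {F : Type} [Field F] [Fintype F] [DecidableEq F] {d e : ℕ}
    (hcard : Fintype.card F - 1 = d * e) (he : 0 < e) {u : F}
    (hu : u ^ e = 1) : ∃ α : F, α ^ d = u := by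
  have hu0 : u ≠ 0 := by
    rintro rfl
    rw [zero_pow he.ne'] at hu
    exact zero_ne_one hu
  lift u to Fˣ using isUnit_iff_ne_zero.2 hu0
  obtain ⟨g, hg⟩ := IsCyclic.exists_generator (α := Fˣ)
  have hord : orderOf g = Fintype.card F - 1 := by
    rw [orderOf_eq_card_of_forall_mem_zpowers hg, Nat.card_eq_fintype_card,
      Fintype.card_units]
  obtain ⟨j, hj⟩ := (mem_powers_iff_mem_zpowers.2 (hg u))
  have hj' : g ^ j = u := hj
  have hdvd : d * e ∣ j * e := by
    rw [← hcard, ← hord]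
    apply orderOf_dvd_of_pow_eq_one
    rw [pow_mul, hj']
    ext
    push_cast
    exact hu
  have hdj : d ∣ j := (Nat.mul_dvd_mul_iff_right he).1 hdvd
  refine ⟨((g ^ (j / d) : Fˣ) : F), ?_⟩
  rw [← Units.val_pow_eq_pow_val, ← pow_mul, Nat.div_mul_cancel hdj, hj']

lemma aux_char_sum {p : ℕ} [Fact p.Prime] {ζ : ℂ} (hζ : IsPrimitiveRoot ζ p) (c : ZMod p) :
    ∑ z : ZMod p, ζ ^ (z * c).val = if c = 0 then (p : ℂ) else 0 := by
  have hp1 : 1 < p := (Fact.out (p := p.Prime)).one_lt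
  haveI : NeZero p := ⟨by omega⟩
  split_ifs with h
  · subst h
    simp [ZMod.val_zero, ZMod.card]
  · have h1 : ∑ z : ZMod p, ζ ^ (z * c).val = ∑ w : ZMod p, ζ ^ w.val := by
      apply Fintype.sum_bijective (fun z : ZMod p => z * c)
        (Equiv.mulRight₀ c h).bijective
      intro z; rfl
    have h2 : ∑ w : ZMod p, ζ ^ w.val = ∑ i ∈ range p, ζ ^ i := by
      apply Finset.sum_nbij' (i := fun w : ZMod p => w.val) (j := fun i : ℕ => (i : ZMod p))
      · intro w _; exact mem_range.2 (ZMod.val_lt w)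
      · intro i _; exact mem_univ _
      · intro w _; exact ZMod.natCast_rightInverse w
      · intro i hi; simp [ZMod.val_cast_of_lt (mem_range.1 hi)]
      · intro a _; rfl
    rw [h1, h2, hζ.geom_sum_eq_zero hp1]

/-- For every nonzero element `a` of the prime subfield `F_p ⊆ F_q`,
`N(a,0) = p^{2m-2} - 1 + p^{m-2}(p-1) + p^{m-2}(p^t - 1)·S`. -/
theorem stmt4 (p t m : ℕ) [Fact p.Prime] (ht : 2 < t) (hm : m = 2 * t)
    (F : Type) [Field F] [Fintype F] [DecidableEq F] [Algebra (ZMod p) F]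
    (hF : Fintype.card F = p ^ m)
    (ζ : ℂ) (hζ : ζ = Complex.exp (2 * Real.pi * Complex.I / p))
    (χ : F → ℂ) (hχ : ∀ x, χ x = ζ ^ (Algebra.trace (ZMod p) F x).val)
    (Δ : Finset F) (hΔ : Δ = univ.filter (fun x : F => x ^ (p ^ t + 1) = 1))
    (S : ℂ) (hS : S = ∑ z ∈ ({0}ᶜ : Finset (ZMod p)), ∑ x ∈ Δ, χ (algebraMap (ZMod p) F z * x))
    (N : F → F → ℕ)
    (hN : ∀ a b : F, N a b = Set.ncard {xy : F × F | xy ≠ (0, 0) ∧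
      Algebra.trace (ZMod p) F (xy.1 + xy.2 ^ (p ^ t - 1)) = 0 ∧
      Algebra.trace (ZMod p) F (a * xy.1 + b * xy.2) = 0})
    (z : ZMod p) (hz : z ≠ 0) :
    (N (algebraMap (ZMod p) F z) 0 : ℂ) =
      (p : ℂ) ^ (2 * m - 2) - 1 + (p : ℂ) ^ (m - 2) * (p - 1)
        + (p : ℂ) ^ (m - 2) * ((p : ℂ) ^ t - 1) * S := by
  have hp1 : 1 < p := (Fact.out (p := p.Prime)).one_lt
  have hpt : 2 ≤ p ^ t := by
    calc 2 = 2 ^ 1 := rfl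
    _ ≤ p ^ t := Nat.pow_le_pow_left hp1 1 |>.trans (Nat.pow_le_pow_right (by omega) (by omega))
  set Tr := Algebra.trace (ZMod p) F with hTr
  set d := p ^ t - 1 with hd
  set n := p ^ t + 1 with hn'
  have hd0 : 0 < d := by omega
  have hn0 : 0 < n := by omega
  -- card F - 1 = d * n
  have hq : Fintype.card F - 1 = d * n := by
    rw [hF, hm, two_mul, pow_add, hd, hn']
    obtain ⟨Q, hQ⟩ : ∃ Q, p ^ t = Q + 1 := ⟨p ^ t - 1, by omega⟩
    rw [hQ]
    have h1 : (Q + 1) * (Q + 1) = Q * (Q + 2) + 1 := by ring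
    have h2 : (Q + 1 - 1) * (Q + 1 + 1) = Q * (Q + 2) := by
      simp only [Nat.add_sub_cancel]
    omega
  -- |Δ| = n
  have hΔcard : Δ.card = n := by
    obtain ⟨ξ, hξ⟩ := aux_prim (F := F) (n := n) ⟨d, by rw [hq]; ring⟩
    have : Δ = Polynomial.nthRootsFinset n (1 : F) := by
      rw [hΔ]; ext x
      simp [Polynomial.mem_nthRootsFinset hn0]
    rw [this, hξ.card_nthRootsFinset]
  have hΔne0 : ∀ u ∈ Δ, u ≠ 0 := by
    intro u hu
    rw [hΔ, mem_filter] at hu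
    rintro rfl
    rw [zero_pow hn0.ne'] at hu
    exact zero_ne_one hu.2
  -- A count
  set A := univ.filter fun x : F => Tr x = 0 with hA'
  have hAcard : A.card = p ^ (m - 1) := aux_card_ker hF (by omega)
  -- Δf and T
  set Δf := Δ.filter (fun u => Tr u = 0) with hΔf
  -- B count
  set B := univ.filter fun y : F => Tr (y ^ d) = 0 with hB'
  have hBcard : B.card = 1 + Δf.card * d := by
    have hsplit : B = insert (0 : F)
        (univ.filter fun y : F => y ≠ 0 ∧ Tr (y ^ d) = 0) := by
      ext y
      simp only [hB', mem_filter, mem_univ, true_and, mem_insert]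
      by_cases hy : y = 0
      · subst hy
        simp [zero_pow hd0.ne']
      · simp [hy]
    have h0nm : (0 : F) ∉ (univ.filter fun y : F => y ≠ 0 ∧ Tr (y ^ d) = 0) := by simp
    rw [hsplit, card_insert_of_notMem h0nm]
    have hmap : ∀ y ∈ (univ.filter fun y : F => y ≠ 0 ∧ Tr (y ^ d) = 0), y ^ d ∈ Δf := by
      intro y hy
      rw [mem_filter] at hy
      rw [hΔf, mem_filter, hΔ, mem_filter]
      refine ⟨⟨mem_univ _, ?_⟩, hy.2.2⟩
      rw [← pow_mul, ← hq]
      exact FiniteField.pow_card_sub_one_eq_one y hy.2.1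
    rw [Finset.card_eq_sum_card_fiberwise hmap]
    have hfibval : ∀ u ∈ Δf,
        ((univ.filter fun y : F => y ≠ 0 ∧ Tr (y ^ d) = 0).filter fun y => y ^ d = u).card
          = d := by
      intro u hu
      rw [hΔf, mem_filter, hΔ, mem_filter] at hu
      have hu1 : u ^ n = 1 := hu.1.2
      have hune : u ≠ 0 := by
        rintro rfl
        rw [zero_pow hn0.ne'] at hu1
        exact zero_ne_one hu1
      have hfeq : ((univ.filter fun y : F => y ≠ 0 ∧ Tr (y ^ d) = 0).filter
          fun y => y ^ d = u) = univ.filter fun y : F => y ^ d = u := by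
        ext y
        simp only [mem_filter, mem_univ, true_and]
        constructor
        · tauto
        · intro hyd
          refine ⟨⟨?_, ?_⟩, hyd⟩
          · rintro rfl
            rw [zero_pow hd0.ne'] at hyd
            exact hune hyd.symm
          · rw [hyd, hu.2]
      obtain ⟨ξ, hξ⟩ := aux_prim (F := F) (n := d) ⟨n, hq⟩
      obtain ⟨α, hα⟩ := aux_exists_root (d := d) (e := n) hq hn0 hu1
      rw [hfeq, aux_fiber hd0 hξ hα hune]
    rw [Finset.sum_congr rfl hfibval, Finset.sum_const, smul_eq_mul]
    omega
  -- N value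
  have hNval : N (algebraMap (ZMod p) F z) 0 = A.card * B.card - 1 := by
    rw [hN]
    have hsetF : {xy : F × F | xy ≠ (0, 0) ∧
        Tr (xy.1 + xy.2 ^ (p ^ t - 1)) = 0 ∧
        Tr ((algebraMap (ZMod p) F z) * xy.1 + 0 * xy.2) = 0}
        = ↑((univ : Finset (F × F)).filter fun xy => xy ≠ (0, 0) ∧
            Tr (xy.1 + xy.2 ^ (p ^ t - 1)) = 0 ∧
            Tr ((algebraMap (ZMod p) F z) * xy.1 + 0 * xy.2) = 0) := by
      ext xy; simp
    rw [hsetF, Set.ncard_coe_finset]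
    have hcond : ∀ xy : F × F, (xy ≠ (0, 0) ∧
        Tr (xy.1 + xy.2 ^ (p ^ t - 1)) = 0 ∧
        Tr ((algebraMap (ZMod p) F z) * xy.1 + 0 * xy.2) = 0)
        ↔ ((Tr xy.1 = 0 ∧ Tr (xy.2 ^ d) = 0) ∧ xy ≠ (0, 0)) := by
      intro xy
      have htr1 : Tr ((algebraMap (ZMod p) F z) * xy.1 + 0 * xy.2) = z * Tr xy.1 := by
        rw [zero_mul, add_zero, ← Algebra.smul_def, map_smul, smul_eq_mul]
      have htr2 : Tr (xy.1 + xy.2 ^ (p ^ t - 1)) = Tr xy.1 + Tr (xy.2 ^ d) := by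
        rw [← hd, map_add]
      rw [htr1, htr2, mul_eq_zero]
      constructor
      · rintro ⟨hne, hsum, hx⟩
        have hx0 : Tr xy.1 = 0 := hx.resolve_left hz
        rw [hx0, zero_add] at hsum
        exact ⟨⟨hx0, hsum⟩, hne⟩
      · rintro ⟨⟨h1, h2⟩, hne⟩
        exact ⟨hne, by rw [h1, h2, add_zero], Or.inr h1⟩
    have hfilter : ((univ : Finset (F × F)).filter fun xy => xy ≠ (0, 0) ∧
        Tr (xy.1 + xy.2 ^ (p ^ t - 1)) = 0 ∧
        Tr ((algebraMap (ZMod p) F z) * xy.1 + 0 * xy.2) = 0)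
        = (A ×ˢ B).erase (0, 0) := by
      ext xy
      rw [mem_filter, Finset.mem_erase, Finset.mem_product]
      simp only [hA', hB', mem_filter, mem_univ, true_and]
      rw [hcond xy]
      tauto
    have hmem00 : ((0 : F), (0 : F)) ∈ A ×ˢ B := by
      rw [Finset.mem_product]
      constructor
      · simp [hA', map_zero]
      · simp [hB', zero_pow hd0.ne', map_zero]
    rw [hfilter, Finset.card_erase_of_mem hmem00, Finset.card_product]
  -- character sum relation
  have hζp : IsPrimitiveRoot ζ p := by
    rw [hζ]; exact Complex.isPrimitiveRoot_exp p (by omega)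
  have htot : ∑ z' : ZMod p, ∑ u ∈ Δ, χ (algebraMap (ZMod p) F z' * u)
      = (Δf.card : ℂ) * p := by
    rw [Finset.sum_comm]
    have hterm : ∀ u ∈ Δ, ∑ z' : ZMod p, χ (algebraMap (ZMod p) F z' * u)
        = if Tr u = 0 then (p : ℂ) else 0 := by
      intro u _
      have hc : ∀ z' : ZMod p, χ (algebraMap (ZMod p) F z' * u)
          = ζ ^ ((z' * Tr u).val) := by
        intro z'
        rw [hχ, ← Algebra.smul_def, map_smul, smul_eq_mul]
      simp only [hc]
      exact aux_char_sum hζp (Tr u)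
    rw [Finset.sum_congr rfl hterm, ← Finset.sum_filter, ← hΔf, Finset.sum_const,
      nsmul_eq_mul]
  have hsplit0 : ∑ z' : ZMod p, ∑ u ∈ Δ, χ (algebraMap (ZMod p) F z' * u)
      = S + (n : ℂ) := by
    rw [Fintype.sum_eq_sum_compl_add (0 : ZMod p), ← hS]
    congr 1
    have hone : ∀ u ∈ Δ, χ (algebraMap (ZMod p) F 0 * u) = 1 := by
      intro u _
      rw [map_zero, zero_mul, hχ, map_zero, ZMod.val_zero, pow_zero]
    rw [Finset.sum_congr rfl hone, Finset.sum_const, hΔcard, nsmul_eq_mul, mul_one]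
  have hPT : (Δf.card : ℂ) * p = S + ((p : ℂ) ^ t + 1) := by
    have h := htot.symm.trans hsplit0
    rw [h]
    congr 1
    rw [hn']
    push_cast
    ring
  -- final computation
  have honeAB : 1 ≤ A.card * B.card := by
    have h0A : (0 : F) ∈ A := by simp [hA', map_zero]
    have h0B : (0 : F) ∈ B := by simp [hB', zero_pow hd0.ne', map_zero]
    have hA0 : 0 < A.card := Finset.card_pos.2 ⟨0, h0A⟩
    have hB0 : 0 < B.card := Finset.card_pos.2 ⟨0, h0B⟩
    exact Nat.one_le_iff_ne_zero.2 (Nat.mul_pos hA0 hB0).ne'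
  have hcastN : (N (algebraMap (ZMod p) F z) 0 : ℂ) = (A.card : ℂ) * (B.card : ℂ) - 1 := by
    rw [hNval, Nat.cast_sub honeAB, Nat.cast_mul, Nat.cast_one]
  have hdcast : ((d : ℕ) : ℂ) = (p : ℂ) ^ t - 1 := by
    rw [hd, Nat.cast_sub (by omega : 1 ≤ p ^ t), Nat.cast_pow, Nat.cast_one]
  rw [hcastN, hAcard, hBcard]
  push_cast
  rw [hdcast]
  have e1 : m - 1 = (m - 2) + 1 := by omega
  have e2 : 2 * m - 2 = (m - 2) + (t + t) := by omega
  rw [e1, e2]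
  have hmt : m - 2 = t + (t - 2) := by omega
  linear_combination ((p : ℂ) ^ (m - 2) * ((p : ℂ) ^ t - 1)) * hPT
end

section
/- For every (a,b) ∈ (F_q × F_q) \ {(0,0)} there exists (x,y) ∈ D with Tr(ax + by) ≠ 0. Consequently, the F_p-linear map sending (a,b) ∈ F_q × F_q to the word (Tr(ax + by))_{(x,y) ∈ D} is injective, i.e., the linear code C_D = {(Tr(ax+by))_{(x,y)∈D} : a, b ∈ F_q} has dimension 2m over F_p. -/
open Finset

private lemma stmt8_arith {p t d : ℕ} (hp : 2 ≤ p) (ht : 3 ≤ t) (h1 : 1 ≤ d)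
    (hle : p ^ d ≤ p ^ (2 * t)) (hdvd : (p ^ t + 1) ∣ p ^ d - 1) : d = 2 * t := by
  have hpow : ∀ a b : ℕ, a ≤ b → p ^ a ≤ p ^ b := fun a b hab =>
    Nat.pow_le_pow_right (by omega) hab
  have hd2t : d ≤ 2 * t := by
    by_contra hc
    have := hpow (2 * t + 1) d (by omega)
    have h2 : p ^ (2 * t) * 2 ≤ p ^ (2 * t + 1) := by
      rw [pow_succ]; exact Nat.mul_le_mul_left _ hp
    have h3 : 1 ≤ p ^ (2 * t) := Nat.one_le_pow _ _ (by omega)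
    omega
  by_contra hne
  have hdlt : d < 2 * t := by omega
  have hpd1 : 2 ≤ p ^ d := le_trans hp (by simpa using hpow 1 d h1)
  rcases le_or_gt d t with hdt | htd
  · -- d ≤ t : divisor too big
    have hlow := Nat.le_of_dvd (by omega) hdvd
    have := hpow d t hdt
    omega
  · -- t < d < 2t
    set r := d - t with hr
    have hrt : r < t := by omega
    have hr1 : 1 ≤ r := by omega
    have hkey : p ^ r * (p ^ t + 1) = (p ^ d - 1) + (p ^ r + 1) := by
      have : p ^ r * p ^ t = p ^ d := by
        rw [← pow_add]; congr 1; omega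
      have h1' : 1 ≤ p ^ d := by omega
      rw [Nat.mul_add, this, mul_one]
      omega
    have hdvd2 : (p ^ t + 1) ∣ p ^ r + 1 := by
      have := Nat.dvd_sub (Dvd.intro (p ^ r) rfl) hdvd
      rwa [mul_comm, hkey, Nat.add_sub_cancel_left] at this
    have hlow := Nat.le_of_dvd (by omega) hdvd2
    have := hpow r t (by omega)
    have hlt : p ^ r < p ^ t := Nat.pow_lt_pow_right (by omega) hrt
    omega

private lemma stmt8_L1 {p : ℕ} [Fact p.Prime] {F : Type} [Field F] [Fintype F] [DecidableEq F]
    [Algebra (ZMod p) F] {t : ℕ} (ht : 2 < t) (hF : Fintype.card F = p ^ (2 * t))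
    (h : ∀ y : F, Algebra.trace (ZMod p) F (y ^ (p ^ t - 1)) = 0) : False := by
  have hp : 2 ≤ p := (Fact.out : p.Prime).two_le
  have hN : 8 ≤ p ^ t :=
    le_trans (by norm_num : (8:ℕ) ≤ 2 ^ 3)
      (le_trans (Nat.pow_le_pow_right two_pos ht) (Nat.pow_le_pow_left hp t))
  set S : Set F := Set.range (fun y : F => y ^ (p ^ t - 1)) with hSdef
  set V : Submodule (ZMod p) F := Submodule.span (ZMod p) S with hVdef
  have h1S : (1:F) ∈ S := ⟨1, one_pow _⟩
  have h1V : (1:F) ∈ V := Submodule.subset_span h1S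
  have hTrV : ∀ v ∈ V, Algebra.trace (ZMod p) F v = 0 := by
    intro v hv
    induction hv using Submodule.span_induction with
    | mem x hx => obtain ⟨y, rfl⟩ := hx; exact h y
    | zero => simp
    | add x y _ _ hx hy => simp [map_add, hx, hy]
    | smul c x _ hx => simp [map_smul, hx]
  have hmulS : ∀ u ∈ S, ∀ v ∈ S, u * v ∈ S := by
    rintro _ ⟨y, rfl⟩ _ ⟨z, rfl⟩; exact ⟨y * z, by simp [mul_pow]⟩
  have hmulV : ∀ u ∈ V, ∀ v ∈ V, u * v ∈ V := by
    intro u hu v hv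
    induction hu using Submodule.span_induction with
    | mem x hx =>
      induction hv using Submodule.span_induction with
      | mem y hy => exact Submodule.subset_span (hmulS _ hx _ hy)
      | zero => simp
      | add y z _ _ hy hz => rw [mul_add]; exact V.add_mem hy hz
      | smul c y _ hy => rw [mul_smul_comm]; exact V.smul_mem c hy
    | zero => simp
    | add x y _ _ hx hy => rw [add_mul]; exact V.add_mem hx hy
    | smul c x _ hx => rw [smul_mul_assoc]; exact V.smul_mem c hx
  have hpowV : ∀ v ∈ V, ∀ k : ℕ, v ^ k ∈ V := by
    intro v hv k
    induction k with
    | zero => simpa using h1V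
    | succ n ih => rw [pow_succ]; exact hmulV _ ih _ hv
  have hcard2 : 2 ≤ Fintype.card F := Fintype.one_lt_card
  have hinvV : ∀ v ∈ V, v⁻¹ ∈ V := by
    intro v hv
    rcases eq_or_ne v 0 with rfl | hv0
    · simpa using V.zero_mem
    · have hv1 : v ^ (Fintype.card F - 1) = 1 := FiniteField.pow_card_sub_one_eq_one v hv0
      have hinv : v⁻¹ = v ^ (Fintype.card F - 2) := by
        refine inv_eq_of_mul_eq_one_right ?_
        rw [← pow_succ']
        rw [show Fintype.card F - 2 + 1 = Fintype.card F - 1 by omega]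
        exact hv1
      rw [hinv]; exact hpowV _ hv _
  -- the span is a subfield
  let K' : Subfield F :=
    { carrier := V
      mul_mem' := fun ha hb => hmulV _ ha _ hb
      one_mem' := h1V
      add_mem' := fun ha hb => V.add_mem ha hb
      zero_mem' := V.zero_mem
      neg_mem' := fun ha => V.neg_mem ha
      inv_mem' := fun x hx => hinvV x hx }
  have hchF : CharP F p := (Algebra.charP_iff (ZMod p) F p).mp (ZMod.charP p)
  have hchK : CharP K' p := (Subfield.subtype K').charP Subtype.coe_injective p
  -- the subgroup of units with value in V
  let H : Subgroup Fˣ :=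
    { carrier := {u : Fˣ | (u : F) ∈ V}
      one_mem' := by simpa using h1V
      mul_mem' := fun {a b} ha hb => by
        simpa [Units.val_mul] using hmulV _ ha _ hb
      inv_mem' := fun {u} hu => by
        simpa [Units.val_inv_eq_inv_val] using hinvV _ hu }
  letI : Fintype H := Fintype.ofFinite _
  letI : Fintype K' := Fintype.ofFinite _
  -- generator of the unit group
  obtain ⟨g, hg⟩ := IsCyclic.exists_generator (α := Fˣ)
  have hog : orderOf g = Fintype.card F - 1 := by
    rw [orderOf_eq_card_of_forall_mem_zpowers hg, Nat.card_eq_fintype_card, Fintype.card_units]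
  have hq1 : Fintype.card F - 1 = (p ^ t - 1) * (p ^ t + 1) := by
    have h1 : 1 ≤ p ^ t := by omega
    have : Fintype.card F = p ^ t * p ^ t := by
      rw [hF, two_mul, pow_add]
    rw [this, Nat.sub_mul, Nat.mul_add, Nat.mul_one]
    omega
  -- the element h0 = g ^ (p^t - 1) has order p^t + 1 and lies in H
  set h0 : Fˣ := g ^ (p ^ t - 1) with hh0
  have hoh0 : orderOf h0 = p ^ t + 1 := by
    rw [hh0, orderOf_pow, hog, hq1, Nat.gcd_comm,
      Nat.gcd_eq_left (Dvd.intro _ rfl),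
      Nat.mul_div_cancel_left _ (by omega : 0 < p ^ t - 1)]
  have hh0H : h0 ∈ H := by
    show ((g ^ (p ^ t - 1) : Fˣ) : F) ∈ V
    rw [Units.val_pow_eq_pow_val]
    exact Submodule.subset_span ⟨(g : F), rfl⟩
  -- Lagrange
  have hdvdH : (p ^ t + 1) ∣ Fintype.card H := by
    have : orderOf (⟨h0, hh0H⟩ : H) = p ^ t + 1 := by
      rw [← hoh0]
      exact (orderOf_injective H.subtype (Subtype.coe_injective) ⟨h0, hh0H⟩).symm
    rw [← this]
    exact orderOf_dvd_card
  -- card H = card K' - 1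
  have hcardH : Fintype.card H = Fintype.card K' - 1 := by
    have hcongr : Fintype.card H = Fintype.card {x : K' // x ≠ 0} := by
      apply Fintype.card_congr
      refine ⟨fun u => ⟨⟨((u : Fˣ) : F), u.2⟩,
          fun hx => Units.ne_zero (u : Fˣ) (congrArg Subtype.val hx)⟩,
        fun x => ⟨Units.mk0 ((x.1 : K') : F)
          (fun h0 => x.2 (Subtype.ext h0)), x.1.2⟩, ?_, ?_⟩
      · intro u
        ext
        rfl
      · intro x
        ext
        rfl
    rw [hcongr]
    rw [Fintype.card_subtype_compl (fun x : K' => x = 0), Fintype.card_subtype_eq (0 : K')]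
  obtain ⟨d, -, hdcard⟩ := FiniteField.card K' p
  have hle : Fintype.card K' ≤ Fintype.card F :=
    Fintype.card_le_of_injective _ (Subtype.coe_injective : Function.Injective ((↑) : K' → F))
  have hdvd' : (p ^ t + 1) ∣ p ^ (d : ℕ) - 1 := by
    rw [← hdcard, ← hcardH]
    exact hdvdH
  have hd : (d : ℕ) = 2 * t :=
    stmt8_arith hp (by omega) d.2 (by rw [← hdcard, ← hF]; exact hle) hdvd'
  have hcardeq : Fintype.card K' = Fintype.card F := by rw [hdcard, hd, hF]
  have hsurj : ∀ x : F, x ∈ V := by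
    have hbij := (Fintype.bijective_iff_injective_and_card ((↑) : K' → F)).mpr
      ⟨Subtype.coe_injective, hcardeq⟩
    intro x
    obtain ⟨v, rfl⟩ := hbij.2 x
    exact v.2
  have h10 : (1 : F) = 0 := by
    have hnd := traceForm_nondegenerate (ZMod p) F
    exact hnd.1 1 fun w => by simpa [Algebra.traceForm_apply] using hTrV w (hsurj w)
  exact one_ne_zero h10

private lemma stmt8_main {p : ℕ} [Fact p.Prime] {F : Type} [Field F] [Fintype F] [DecidableEq F]
    [Algebra (ZMod p) F] {t : ℕ} (ht : 2 < t) (hF : Fintype.card F = p ^ (2 * t))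
    (a b : F)
    (h : ∀ x y : F, Algebra.trace (ZMod p) F (x + y ^ (p ^ t - 1)) = 0 →
      Algebra.trace (ZMod p) F (a * x + b * y) = 0) : a = 0 ∧ b = 0 := by
  have hp : 2 ≤ p := (Fact.out : p.Prime).two_le
  have hN : 8 ≤ p ^ t :=
    le_trans (by norm_num : (8:ℕ) ≤ 2 ^ 3)
      (le_trans (Nat.pow_le_pow_right two_pos ht) (Nat.pow_le_pow_left hp t))
  have hnd : ∀ z : F, (∀ w : F, Algebra.trace (ZMod p) F (z * w) = 0) → z = 0 := fun z hz =>
    (traceForm_nondegenerate (ZMod p) F).1 z fun w => by simpa [Algebra.traceForm_apply] using hz w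
  obtain ⟨w0, hw0⟩ : ∃ w : F, Algebra.trace (ZMod p) F w ≠ 0 := by
    by_contra hc
    push_neg at hc
    exact one_ne_zero (hnd 1 fun w => by simpa using hc (1 * w))
  set e : F := (Algebra.trace (ZMod p) F w0)⁻¹ • w0 with he
  have hTre : Algebra.trace (ZMod p) F e = 1 := by
    rw [he, map_smul, smul_eq_mul, inv_mul_cancel₀ hw0]
  have hzero_pow : (0:F) ^ (p ^ t - 1) = 0 := zero_pow (by omega)
  have hC : ∀ k : F, Algebra.trace (ZMod p) F k = 0 →
      Algebra.trace (ZMod p) F (a * k) = 0 := by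
    intro k hk
    have := h k 0 (by rw [hzero_pow, add_zero]; exact hk)
    simpa using this
  set c : ZMod p := Algebra.trace (ZMod p) F (a * e) with hc
  have hD : ∀ x : F, Algebra.trace (ZMod p) F (a * x) = c * Algebra.trace (ZMod p) F x := by
    intro x
    have hk : Algebra.trace (ZMod p) F (x - (Algebra.trace (ZMod p) F x) • e) = 0 := by
      rw [map_sub, map_smul, smul_eq_mul, hTre, mul_one, sub_self]
    have h2 := hC _ hk
    have h3 : a * x = a * (x - (Algebra.trace (ZMod p) F x) • e)
        + (Algebra.trace (ZMod p) F x) • (a * e) := by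
      rw [mul_sub, mul_smul_comm, sub_add_cancel]
    rw [h3, map_add, h2, map_smul, smul_eq_mul, zero_add, ← hc, mul_comm]
  have hE : ∀ y : F, Algebra.trace (ZMod p) F (b * y)
      = c * Algebra.trace (ZMod p) F (y ^ (p ^ t - 1)) := by
    intro y
    set s : ZMod p := Algebra.trace (ZMod p) F (y ^ (p ^ t - 1)) with hs
    have hx : Algebra.trace (ZMod p) F ((-(s • e)) + y ^ (p ^ t - 1)) = 0 := by
      rw [map_add, map_neg, map_smul, smul_eq_mul, hTre, mul_one, ← hs]
      ring
    have h2 := h _ _ hx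
    rw [map_add, hD, map_neg, map_smul, smul_eq_mul, hTre, mul_one] at h2
    linear_combination h2
  obtain ⟨g, hg⟩ := IsCyclic.exists_generator (α := Fˣ)
  have hog : orderOf g = Fintype.card F - 1 := by
    rw [orderOf_eq_card_of_forall_mem_zpowers hg, Nat.card_eq_fintype_card, Fintype.card_units]
  have hq1 : Fintype.card F - 1 = (p ^ t - 1) * (p ^ t + 1) := by
    have : Fintype.card F = p ^ t * p ^ t := by rw [hF, two_mul, pow_add]
    rw [this, Nat.sub_mul, Nat.mul_add, Nat.mul_one]
    omega
  set u : Fˣ := g ^ (p ^ t + 1) with hu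
  have hupow : ((u : F)) ^ (p ^ t - 1) = 1 := by
    have : u ^ (p ^ t - 1) = 1 := by
      rw [hu, ← pow_mul]
      have : (p ^ t + 1) * (p ^ t - 1) = orderOf g := by rw [hog, hq1]; ring
      rw [this, pow_orderOf_eq_one]
    rw [← Units.val_pow_eq_pow_val, this, Units.val_one]
  have hune : (u : F) ≠ 1 := by
    intro hceq
    have h1 : u = 1 := Units.ext hceq
    have h2 : orderOf g ∣ p ^ t + 1 := orderOf_dvd_of_pow_eq_one h1
    have h3 := Nat.le_of_dvd (by omega) h2
    rw [hog, hq1] at h3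
    have h4 : 7 * (p ^ t + 1) ≤ (p ^ t - 1) * (p ^ t + 1) :=
      Nat.mul_le_mul_right _ (by omega)
    omega
  have hb : b = 0 := by
    apply hnd
    intro v
    have huv : ∀ w : F, Algebra.trace (ZMod p) F (b * (w * u))
        = Algebra.trace (ZMod p) F (b * w) := by
      intro w
      rw [hE, hE, mul_pow, hupow, mul_one]
    have hne0 : (u : F) - 1 ≠ 0 := sub_ne_zero.mpr hune
    set w : F := v * ((u : F) - 1)⁻¹ with hw
    have hwv : w * ((u : F) - 1) = v := by
      rw [hw]
      field_simp
    have hv : b * v = b * (w * u) - b * w := by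
      rw [← mul_sub]
      congr 1
      rw [← hwv]
      ring
    rw [hv, map_sub, huv, sub_self]
  have hcTr : ∀ y : F, c * Algebra.trace (ZMod p) F (y ^ (p ^ t - 1)) = 0 := fun y => by
    rw [← hE y, hb, zero_mul, map_zero]
  have hc0 : c = 0 := by
    by_contra hcne
    exact stmt8_L1 ht hF (fun y => by
      rcases mul_eq_zero.mp (hcTr y) with h' | h'
      · exact absurd h' hcne
      · exact h')
  have ha : a = 0 := hnd a (fun w => by rw [hD, hc0, zero_mul])
  exact ⟨ha, hb⟩


/-- For every `(a,b) ≠ (0,0)` there exists `(x,y) ∈ D` with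
`Tr(ax+by) ≠ 0`; consequently the `F_p`-linear map `(a,b) ↦ (Tr(ax+by))_{(x,y)∈D}`
is injective, i.e. the code `C_D` has dimension `2m` over `F_p`. -/
theorem stmt8 (p t m : ℕ) [Fact p.Prime] (ht : 2 < t) (hm : m = 2 * t)
    (F : Type) [Field F] [Fintype F] [DecidableEq F] [Algebra (ZMod p) F]
    (hF : Fintype.card F = p ^ m)
    (D : Finset (F × F))
    (hD : D = univ.filter (fun xy : F × F => xy ≠ (0, 0) ∧
      Algebra.trace (ZMod p) F (xy.1 + xy.2 ^ (p ^ t - 1)) = 0)) :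
    (∀ a b : F, (a, b) ≠ (0, 0) →
        ∃ xy ∈ D, Algebra.trace (ZMod p) F (a * xy.1 + b * xy.2) ≠ 0) ∧
      Function.Injective (fun ab : F × F => fun xy : ↥D =>
        Algebra.trace (ZMod p) F (ab.1 * (xy : F × F).1 + ab.2 * (xy : F × F).2)) := by
  have hF' : Fintype.card F = p ^ (2 * t) := by rw [hF, hm]
  constructor
  · intro a b hab
    by_contra hcon
    push_neg at hcon
    have h : ∀ x y : F, Algebra.trace (ZMod p) F (x + y ^ (p ^ t - 1)) = 0 →
        Algebra.trace (ZMod p) F (a * x + b * y) = 0 := by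
      intro x y hxy
      by_cases hz : (x, y) = ((0 : F), (0 : F))
      · rw [Prod.ext_iff] at hz
        simp only at hz
        rw [hz.1, hz.2, mul_zero, mul_zero, add_zero, map_zero]
      · exact hcon (x, y)
          (by rw [hD]; simp only [mem_filter, mem_univ, true_and]; exact ⟨hz, hxy⟩)
    obtain ⟨ha, hb⟩ := stmt8_main ht hF' a b h
    exact hab (by rw [ha, hb])
  · intro ab1 ab2 heq
    have h : ∀ x y : F, Algebra.trace (ZMod p) F (x + y ^ (p ^ t - 1)) = 0 →
        Algebra.trace (ZMod p) F ((ab1.1 - ab2.1) * x + (ab1.2 - ab2.2) * y) = 0 := by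
      intro x y hxy
      by_cases hz : (x, y) = ((0 : F), (0 : F))
      · rw [Prod.ext_iff] at hz
        simp only at hz
        rw [hz.1, hz.2, mul_zero, mul_zero, add_zero, map_zero]
      · have hmem : (x, y) ∈ D := by
          rw [hD]; simp only [mem_filter, mem_univ, true_and]; exact ⟨hz, hxy⟩
        have h2 := congrFun heq (⟨(x, y), hmem⟩ : ↥D)
        simp only at h2
        have hrw : (ab1.1 - ab2.1) * x + (ab1.2 - ab2.2) * y
            = (ab1.1 * x + ab1.2 * y) - (ab2.1 * x + ab2.2 * y) := by ring
        rw [hrw, map_sub, h2, sub_self]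
    obtain ⟨ha, hb⟩ := stmt8_main ht hF' _ _ h
    exact Prod.ext (sub_eq_zero.mp ha) (sub_eq_zero.mp hb)
end

section
/- Every nonzero codeword of the dual code C_D^⊥ has Hamming weight at least 2, and C_D^⊥ contains a nonzero codeword of Hamming weight at most 4. Equivalently, the minimum distance d⊥ of C_D^⊥ satisfies 2 ≤ d⊥ ≤ 4. -/
open Finset

/-- Every nonzero codeword of the dual code `C_D^⊥` has Hamming weight
at least 2, and `C_D^⊥` contains a nonzero codeword of Hamming weight at most 4;
i.e. the minimum distance `d⊥` of `C_D^⊥` satisfies `2 ≤ d⊥ ≤ 4`. -/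
theorem stmt9 (p t m : ℕ) [Fact p.Prime] (ht : 2 < t) (hm : m = 2 * t)
    (F : Type) [Field F] [Fintype F] [DecidableEq F] [Algebra (ZMod p) F]
    (hF : Fintype.card F = p ^ m)
    (D : Finset (F × F))
    (hD : D = univ.filter (fun xy : F × F => xy ≠ (0, 0) ∧
      Algebra.trace (ZMod p) F (xy.1 + xy.2 ^ (p ^ t - 1)) = 0))
    (dual : (↥D → ZMod p) → Prop)
    (hdual : ∀ f, dual f ↔ ∀ a b : F,
      ∑ xy : ↥D, f xy * Algebra.trace (ZMod p) F (a * (xy : F × F).1 + b * (xy : F × F).2) = 0)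
    (wt : (↥D → ZMod p) → ℕ)
    (hwt : ∀ f, wt f = (univ.filter (fun xy : ↥D => f xy ≠ 0)).card) :
    (∀ f : ↥D → ZMod p, dual f → f ≠ 0 → 2 ≤ wt f) ∧
      (∃ f : ↥D → ZMod p, dual f ∧ f ≠ 0 ∧ wt f ≤ 4) := by
  classical
  have hp : p.Prime := Fact.out
  have hp2 : 2 ≤ p := hp.two_le
  have hMF : Module.Finite (ZMod p) F := Module.finite_iff_finite.mpr inferInstance
  have hnd : ∀ x : F, x ≠ 0 → ∃ a : F, Algebra.trace (ZMod p) F (x * a) ≠ 0 := by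
    intro x hx
    have htr := (traceForm_nondegenerate (ZMod p) F).1 x
    simp_rw [Algebra.traceForm_apply] at htr
    by_contra! hf
    exact hx (htr hf)
  constructor
  · intro f hf hf0
    by_contra hlt
    push_neg at hlt
    obtain ⟨z0, hz0⟩ : ∃ z : ↥D, f z ≠ 0 := by
      by_contra h; push_neg at h; exact hf0 (funext fun z => h z)
    have hcard : (univ.filter (fun z : ↥D => f z ≠ 0)).card ≤ 1 := by
      rw [hwt f] at hlt; omega
    have huniq : ∀ z : ↥D, f z ≠ 0 → z = z0 := fun z hz =>
      Finset.card_le_one.mp hcard z (by simp [hz]) z0 (by simp [hz0])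
    have hTr0 : ∀ a b : F,
        Algebra.trace (ZMod p) F (a * (z0 : F × F).1 + b * (z0 : F × F).2) = 0 := by
      intro a b
      have hs := (hdual f).mp hf a b
      rw [Fintype.sum_eq_single z0 (fun z hz => by
        rcases eq_or_ne (f z) 0 with h | h
        · rw [h, zero_mul]
        · exact absurd (huniq z h) hz)] at hs
      exact (mul_eq_zero.mp hs).resolve_left hz0
    have hDne : ∀ w : F × F, w ∈ D → w ≠ (0, 0) := by
      intro w hwD
      rw [hD, mem_filter] at hwD
      exact hwD.2.1
    have hne : (z0 : F × F) ≠ (0, 0) := hDne _ z0.2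
    rcases eq_or_ne (z0 : F × F).1 0 with h1 | h1
    · have h2 : (z0 : F × F).2 ≠ 0 := fun h2 => hne (Prod.ext h1 h2)
      obtain ⟨a, ha⟩ := hnd _ h2
      have := hTr0 0 a
      rw [zero_mul, zero_add, mul_comm] at this
      exact ha this
    · obtain ⟨a, ha⟩ := hnd _ h1
      have := hTr0 a 0
      rw [zero_mul, add_zero, mul_comm] at this
      exact ha this
  · -- kernel of trace is large
    set Tr := Algebra.trace (ZMod p) F with hTr
    set K : Finset F := univ.filter (fun x => Tr x = 0) with hK
    have hfib : ∀ c : ZMod p, (univ.filter fun x : F => Tr x = c).card ≤ K.card := by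
      intro c
      rcases (univ.filter fun x : F => Tr x = c).eq_empty_or_nonempty with he | ⟨x0, hx0⟩
      · simp [he]
      · rw [mem_filter] at hx0
        apply Finset.card_le_card_of_injOn (fun x => x - x0)
        · intro x hx
          rw [Finset.mem_coe, mem_filter] at hx
          simp [hK, map_sub, hx.2, hx0.2]
        · intro x _ y _ hxy
          simpa using sub_left_injective hxy
    have hbig : 5 < K.card := by
      have hcardF : (univ : Finset F).card = ∑ c : ZMod p, (univ.filter fun x : F => Tr x = c).card :=
        Finset.card_eq_sum_card_fiberwise (fun x _ => mem_univ (Tr x))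
      have hle : (univ : Finset F).card ≤ p * K.card := by
        rw [hcardF]
        calc ∑ c : ZMod p, (univ.filter fun x : F => Tr x = c).card
            ≤ ∑ _c : ZMod p, K.card := Finset.sum_le_sum (fun c _ => hfib c)
          _ = p * K.card := by rw [Finset.sum_const, card_univ, ZMod.card, smul_eq_mul]
      rw [Finset.card_univ, hF] at hle
      have hm6 : 6 ≤ m := by omega
      have h1 : p ^ 6 ≤ p ^ m := Nat.pow_le_pow_right (by omega) hm6
      have h3 : p * p ^ 5 ≤ p * K.card := by
        calc p * p ^ 5 = p ^ 6 := by ring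
          _ ≤ p ^ m := h1
          _ ≤ p * K.card := hle
      have h4 : p ^ 5 ≤ K.card := Nat.le_of_mul_le_mul_left h3 hp.pos
      have h5 : 2 ^ 5 ≤ p ^ 5 := Nat.pow_le_pow_left hp2 5
      norm_num at h5
      omega
    -- pick x1
    obtain ⟨a1, ha1, b1, hb1, hab1⟩ := Finset.one_lt_card.mp (by omega : 1 < K.card)
    obtain ⟨x1, hx1K, hx1⟩ : ∃ x1 ∈ K, x1 ≠ 0 := by
      rcases eq_or_ne a1 0 with h | h
      · exact ⟨b1, hb1, fun hb => hab1 (h.trans hb.symm)⟩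
      · exact ⟨a1, ha1, h⟩
    rw [hK, mem_filter] at hx1K
    have htx1 : Tr x1 = 0 := hx1K.2
    -- bad set
    set B : Finset F := {0, x1, -x1, -2*x1} ∪ univ.filter (fun x => 2*x = -x1) with hB
    have hB1 : (univ.filter (fun x : F => 2*x = -x1)).card ≤ 1 := by
      apply Finset.card_le_one.mpr
      intro a ha b hb
      rw [mem_filter] at ha hb
      rcases eq_or_ne (2 : F) 0 with h2 | h2
      · exfalso
        apply hx1
        have hx1z : -x1 = 0 := by rw [← ha.2, h2, zero_mul]
        simpa using hx1z
      · exact mul_left_cancel₀ h2 (ha.2.trans hb.2.symm)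
    have hB4 : ({0, x1, -x1, -2*x1} : Finset F).card ≤ 4 := by
      have c1 := Finset.card_insert_le (0:F) ({x1, -x1, -2*x1} : Finset F)
      have c2 := Finset.card_insert_le x1 ({-x1, -2*x1} : Finset F)
      have c3 := Finset.card_insert_le (-x1) ({-2*x1} : Finset F)
      have c4 : ({-2*x1} : Finset F).card = 1 := Finset.card_singleton _
      omega
    have hBcard : B.card ≤ 5 := by
      calc B.card ≤ ({0, x1, -x1, -2*x1} : Finset F).card
          + (univ.filter (fun x : F => 2*x = -x1)).card := Finset.card_union_le _ _
        _ ≤ 5 := by omega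
    obtain ⟨x2, hx2⟩ : (K \ B).Nonempty := by
      rw [← Finset.card_pos]
      have := Finset.le_card_sdiff B K
      omega
    rw [Finset.mem_sdiff] at hx2
    obtain ⟨hx2K, hx2B⟩ := hx2
    rw [hK, mem_filter] at hx2K
    have htx2 : Tr x2 = 0 := hx2K.2
    rw [hB] at hx2B
    simp only [Finset.mem_union, Finset.mem_insert, Finset.mem_singleton, Finset.mem_filter,
      mem_univ, true_and, not_or] at hx2B
    obtain ⟨⟨hx20, hx2x1, hx2nx1, hx2n2x1⟩, hx22⟩ := hx2B
    set x3 : F := -(x1 + x2) with hx3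
    have htx3 : Tr x3 = 0 := by rw [hx3, map_neg, map_add, htx1, htx2]; ring
    have hx30 : x3 ≠ 0 := fun h => hx2nx1 (by
      have : x1 + x2 = 0 := by rwa [hx3, neg_eq_zero] at h
      linear_combination this)
    have hx31 : x3 ≠ x1 := fun h => hx2n2x1 (by rw [hx3] at h; linear_combination -h)
    have hx32 : x3 ≠ x2 := fun h => hx22 (by rw [hx3] at h; linear_combination -h)
    have hsum3 : x1 + x2 + x3 = 0 := by rw [hx3]; ring
    -- exponent nonzero
    have hpe : p ^ t - 1 ≠ 0 := by
      have h8 : 2 ^ 3 ≤ p ^ t :=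
        le_trans (Nat.pow_le_pow_right (by norm_num) (by omega)) (Nat.pow_le_pow_left hp2 t)
      omega
    have hmemD : ∀ x : F, x ≠ 0 → Tr x = 0 → (x, (0:F)) ∈ D := by
      intro x hx htx
      rw [hD, mem_filter]
      refine ⟨mem_univ _, fun h => hx (congrArg Prod.fst h), ?_⟩
      simp only [zero_pow hpe, add_zero]
      exact htx
    have hP1 : (x1, (0:F)) ∈ D := hmemD x1 hx1 htx1
    have hP2 : (x2, (0:F)) ∈ D := hmemD x2 hx20 htx2
    have hP3 : (x3, (0:F)) ∈ D := hmemD x3 hx30 htx3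
    set P1 : F × F := (x1, 0) with hP1d
    set P2 : F × F := (x2, 0) with hP2d
    set P3 : F × F := (x3, 0) with hP3d
    have hP12 : P1 ≠ P2 := fun h => hx2x1 (congrArg Prod.fst h).symm
    have hP13 : P1 ≠ P3 := fun h => hx31 (congrArg Prod.fst h).symm
    have hP23 : P2 ≠ P3 := fun h => hx32 (congrArg Prod.fst h).symm
    set g : F × F → ZMod p := fun z => if z = P1 ∨ z = P2 ∨ z = P3 then 1 else 0 with hg
    refine ⟨fun z => g ↑z, ?_, ?_, ?_⟩
    · rw [hdual]
      intro a b
      have hrw : ∑ xy : ↥D, g ↑xy * Tr (a * (xy : F × F).1 + b * (xy : F × F).2)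
          = ∑ xy ∈ D, g xy * Tr (a * xy.1 + b * xy.2) :=
        Finset.sum_coe_sort D (fun xy => g xy * Tr (a * xy.1 + b * xy.2))
      rw [hrw]
      have hsub : ({P1, P2, P3} : Finset (F × F)) ⊆ D := by
        intro z hz
        simp only [Finset.mem_insert, Finset.mem_singleton] at hz
        rcases hz with h | h | h <;> subst h <;> assumption
      rw [← Finset.sum_subset hsub (fun z _ hz => by
        have : g z = 0 := by
          rw [hg]
          simp only [Finset.mem_insert, Finset.mem_singleton, not_or] at hz
          simp [hz.1, hz.2.1, hz.2.2]
        rw [this, zero_mul])]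
      rw [Finset.sum_insert (by simp [hP12, hP13]),
        Finset.sum_insert (by simp [hP23]), Finset.sum_singleton]
      have hg1 : g P1 = 1 := if_pos (Or.inl rfl)
      have hg2 : g P2 = 1 := if_pos (Or.inr (Or.inl rfl))
      have hg3 : g P3 = 1 := if_pos (Or.inr (Or.inr rfl))
      rw [hg1, hg2, hg3, one_mul, one_mul, one_mul]
      have h3' : Tr (a * P3.1 + b * P3.2) = - Tr (a * P1.1 + b * P1.2)
          - Tr (a * P2.1 + b * P2.2) := by
        have e : a * P3.1 + b * P3.2 = -(a * P1.1 + b * P1.2 + (a * P2.1 + b * P2.2)) := by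
          simp only [hP1d, hP2d, hP3d, hx3]
          ring
        rw [e, map_neg, map_add]
        ring
      linear_combination h3'
    · intro h0
      have := congrFun h0 ⟨P1, hP1⟩
      rw [hg] at this
      simp only [if_pos (Or.inl rfl : P1 = P1 ∨ P1 = P2 ∨ P1 = P3)] at this
      exact one_ne_zero this
    · rw [hwt]
      calc (univ.filter (fun z : ↥D => g ↑z ≠ 0)).card
          ≤ ({P1, P2, P3} : Finset (F × F)).card := by
            apply Finset.card_le_card_of_injOn (fun z : ↥D => (z : F × F))
            · intro z hz
              rw [Finset.mem_coe, mem_filter] at hz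
              by_contra hc
              simp only [Finset.mem_coe, Finset.mem_insert, Finset.mem_singleton, not_or] at hc
              exact hz.2 (by rw [hg]; simp [hc.1, hc.2.1, hc.2.2])
            · intro x _ y _ hxy
              exact Subtype.ext hxy
        _ ≤ 4 := by
            have c1 := Finset.card_insert_le P1 ({P2, P3} : Finset (F × F))
            have c2 := Finset.card_insert_le P2 ({P3} : Finset (F × F))
            have c3 : ({P3} : Finset (F × F)).card = 1 := Finset.card_singleton _
            omega
end

section
/- The number of pairs (a,b) with a a nonzero element of the prime subfield F_p, b ∈ F_q^*, and such that the unique v ∈ Γ with Tr_{q/t}(bv) = 0 satisfies Tr(v^{p^t−1}) ≠ 0, is exactly ((p² − 2p + 1)(p^m−1) − (p^{t+1} − p^t − p + 1)·S)/p; moreover every such pair satisfies wt(a,b) = (p^{2m−2} − p^{m−2})(p−1) + p^{m−2}(p^t + S). -/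
open Finset

section Helpers
open scoped Classical

lemma fiber_card {A B : Type*} [AddCommGroup A] [AddCommGroup B] [Fintype A] [Fintype B]
    [DecidableEq B] (f : A →+ B) (hf : Function.Surjective f) (c : B) :
    (univ.filter fun x => f x = c).card * Fintype.card B = Fintype.card A := by
  have key : ∀ c₁ c₂ : B, (univ.filter fun x => f x = c₁).card = (univ.filter fun x => f x = c₂).card := by
    intro c₁ c₂
    obtain ⟨x₁, hx₁⟩ := hf c₁
    obtain ⟨x₂, hx₂⟩ := hf c₂
    apply Finset.card_nbij' (fun x => x - x₁ + x₂) (fun x => x - x₂ + x₁)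
    · intro a ha
      simp only [Finset.mem_coe, mem_filter, mem_univ, true_and] at ha ⊢
      simp [map_add, map_sub, ha, hx₁, hx₂]
    · intro a ha
      simp only [Finset.mem_coe, mem_filter, mem_univ, true_and] at ha ⊢
      simp [map_add, map_sub, ha, hx₁, hx₂]
    · intro a _; simp
    · intro a _; simp
  have h2 := Finset.card_eq_sum_card_fiberwise (f := f) (s := univ) (t := univ)
    (fun x _ => mem_univ (f x))
  rw [Finset.card_univ] at h2
  rw [h2, Finset.sum_congr rfl (fun b _ => key b c), Finset.sum_const, Finset.card_univ,
    smul_eq_mul, mul_comm]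

lemma zmod_char_sum (p : ℕ) [Fact p.Prime] (ζ : ℂ) (hζ : IsPrimitiveRoot ζ p) (c : ZMod p) :
    ∑ z ∈ ({0}ᶜ : Finset (ZMod p)), ζ ^ (z * c).val
      = if c = 0 then ((p : ℂ) - 1) else -1 := by
  have hp1 : 1 < p := (Fact.out : p.Prime).one_lt
  have hall : ∑ z : ZMod p, ζ ^ z.val = 0 := by
    rw [← hζ.geom_sum_eq_zero hp1]
    refine Finset.sum_nbij' (fun z : ZMod p => z.val) (fun i : ℕ => (i : ZMod p))
      ?_ ?_ ?_ ?_ ?_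
    · intro z _; exact Finset.mem_range.2 (ZMod.val_lt z)
    · intro i _; exact mem_univ _
    · intro z _; simp [ZMod.natCast_val, ZMod.cast_id]
    · intro i hi; exact ZMod.val_cast_of_lt (Finset.mem_range.1 hi)
    · intro z _; rfl
  split_ifs with hc
  · subst hc
    rw [Finset.sum_congr rfl (fun z _ => by rw [mul_zero, ZMod.val_zero, pow_zero])]
    rw [Finset.sum_const, Finset.card_compl, Finset.card_singleton, ZMod.card]
    rw [nsmul_eq_mul, mul_one, Nat.cast_sub hp1.le, Nat.cast_one]
  · have hbij : ∑ z ∈ ({0}ᶜ : Finset (ZMod p)), ζ ^ (z * c).val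
        = ∑ w ∈ ({0}ᶜ : Finset (ZMod p)), ζ ^ w.val := by
      refine Finset.sum_nbij' (fun z => z * c) (fun w => w * c⁻¹) ?_ ?_ ?_ ?_ ?_
      · intro z hz
        simp only [Finset.mem_compl, Finset.mem_singleton] at hz ⊢
        exact mul_ne_zero hz hc
      · intro w hw
        simp only [Finset.mem_compl, Finset.mem_singleton] at hw ⊢
        exact mul_ne_zero hw (inv_ne_zero hc)
      · intro z _; field_simp
      · intro w _; field_simp
      · intro z _; rfl
    rw [hbij]
    have h3 : ∑ w ∈ ({0}ᶜ : Finset (ZMod p)), ζ ^ w.val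
        = (∑ w : ZMod p, ζ ^ w.val) - ζ ^ (0 : ZMod p).val := by
      rw [← Finset.sum_compl_add_sum ({0} : Finset (ZMod p)) (fun w => ζ ^ w.val)]
      simp
    rw [h3, hall, ZMod.val_zero, pow_zero]
    ring

lemma card_subfield_filter {F : Type*} [Field F] [Fintype F] (E : Subfield F) [Fintype ↥E]
    (Q : F → Prop) [DecidablePred (fun x : F => x ∈ E ∧ Q x)]
    [DecidablePred (fun ε : ↥E => Q ↑ε)] :
    (univ.filter fun x => x ∈ E ∧ Q x).card = (univ.filter fun ε : ↥E => Q ↑ε).card := by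
  classical
  refine Finset.card_nbij' (fun x => if h : x ∈ E then (⟨x, h⟩ : ↥E) else 0)
    (fun ε => ↑ε) ?_ ?_ ?_ ?_
  · intro x hx
    simp only [Finset.mem_coe, mem_filter, mem_univ, true_and] at hx ⊢
    rw [dif_pos hx.1]
    exact hx.2
  · intro ε hε
    simp only [Finset.mem_coe, mem_filter, mem_univ, true_and] at hε ⊢
    exact ⟨ε.2, hε⟩
  · intro x hx
    simp only [Finset.mem_coe, mem_filter, mem_univ, true_and] at hx
    simp only [dif_pos hx.1]
  · intro ε hε
    simp only [dif_pos ε.2]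

section Cyclic
variable {F : Type} [Field F] [Fintype F] [DecidableEq F]

lemma my_horder (α : Fˣ) (hα : ∀ x : Fˣ, x ∈ Subgroup.zpowers α) :
    orderOf α = Fintype.card F - 1 := by
  rw [orderOf_eq_card_of_forall_mem_zpowers hα, Nat.card_eq_fintype_card, Fintype.card_units]

lemma my_alpha_inj (α : Fˣ) (hα : ∀ x : Fˣ, x ∈ Subgroup.zpowers α) {a b : ℕ}
    (ha : a < Fintype.card F - 1) (hb : b < Fintype.card F - 1)
    (h : (α : F) ^ a = (α : F) ^ b) : a = b := by
  have h' : α ^ a = α ^ b := Units.ext (by push_cast; exact h)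
  have hord := my_horder α hα
  exact pow_injOn_Iio_orderOf (by simpa [hord] using ha) (by simpa [hord] using hb) h'

lemma my_pow_eq_one_iff (α : Fˣ) (hα : ∀ x : Fˣ, x ∈ Subgroup.zpowers α)
    {d s : ℕ} (hds : d * s = Fintype.card F - 1) (hd : 0 < d) (hs : 0 < s)
    (x : F) : x ^ d = 1 ↔ ∃ j < d, x = (α : F) ^ (j * s) := by
  have hord := my_horder α hα
  constructor
  · intro hx
    have hx0 : x ≠ 0 := by
      rintro rfl
      simp [zero_pow hd.ne'] at hx
    have hud : (Units.mk0 x hx0) ^ d = 1 := Units.ext (by simpa using hx)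
    obtain ⟨k, hk⟩ := mem_powers_iff_mem_zpowers.2 (hα (Units.mk0 x hx0))
    set k' := k % orderOf α with hk'def
    have hk'lt : k' < orderOf α := Nat.mod_lt _ (by rw [hord, ← hds]; positivity)
    have huk' : α ^ k' = Units.mk0 x hx0 := by rw [hk'def, pow_mod_orderOf]; exact hk
    have hdvd : orderOf α ∣ k' * d :=
      orderOf_dvd_of_pow_eq_one (by rw [pow_mul, huk']; exact hud)
    rw [hord, ← hds] at hdvd hk'lt
    have hsk : s ∣ k' := by
      have h2 : d * s ∣ d * k' := by rwa [mul_comm k' d] at hdvd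
      exact (Nat.mul_dvd_mul_iff_left hd).1 h2
    obtain ⟨j, hj⟩ := hsk
    refine ⟨j, ?_, ?_⟩
    · by_contra hjd
      push_neg at hjd
      have h3 : d * s ≤ s * j := by rw [mul_comm s j]; exact Nat.mul_le_mul_right s hjd
      omega
    · have := congrArg Units.val huk'
      rw [Units.val_pow_eq_pow_val, Units.val_mk0] at this
      rw [← this, hj, mul_comm s j]
  · rintro ⟨j, hjd, rfl⟩
    have h1 : α ^ (j * s * d) = 1 := by
      have h2 : j * s * d = (d * s) * j := by ring
      rw [h2, pow_mul, hds, ← hord, pow_orderOf_eq_one, one_pow]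
    rw [← pow_mul]
    have := congrArg Units.val h1
    rwa [Units.val_pow_eq_pow_val, Units.val_one] at this

lemma my_filter_card (α : Fˣ) (hα : ∀ x : Fˣ, x ∈ Subgroup.zpowers α)
    {d s : ℕ} (hds : d * s = Fintype.card F - 1) (hd : 0 < d) (hs : 0 < s) :
    (univ.filter fun x : F => x ^ d = 1).card = d := by
  have hiff := my_pow_eq_one_iff α hα hds hd hs
  have h1 : (univ.filter fun x : F => x ^ d = 1) = (range d).image (fun j => (α : F) ^ (j * s)) := by
    ext x
    simp only [mem_filter, mem_univ, true_and, mem_image, mem_range, hiff x]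
    constructor
    · rintro ⟨j, hj, rfl⟩; exact ⟨j, hj, rfl⟩
    · rintro ⟨j, hj, rfl⟩; exact ⟨j, hj, rfl⟩
  rw [h1, Finset.card_image_of_injOn, Finset.card_range]
  intro j₁ h₁ j₂ h₂ he
  simp only [Finset.coe_range, Set.mem_Iio] at h₁ h₂
  have := my_alpha_inj α hα (a := j₁ * s) (b := j₂ * s)
    (by rw [← hds]; exact Nat.mul_lt_mul_of_lt_of_le h₁ le_rfl hs)
    (by rw [← hds]; exact Nat.mul_lt_mul_of_lt_of_le h₂ le_rfl hs) he
  exact Nat.eq_of_mul_eq_mul_right hs this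

end Cyclic
end Helpers

set_option maxHeartbeats 2000000 in
/-- **Statement 11.** The number of pairs `(a,b)` with `a ∈ F_p^*`, `b ∈ F_q^*`, such that
the unique `v ∈ Γ` with `Tr_{q/t}(bv) = 0` satisfies `Tr(v^{p^t-1}) ≠ 0`, is
`((p²-2p+1)(p^m-1) - (p^{t+1}-p^t-p+1)·S)/p`; moreover every such pair has
`wt(a,b) = (p^{2m-2}-p^{m-2})(p-1) + p^{m-2}(p^t + S)`. -/
theorem stmt12 (p t m : ℕ) [Fact p.Prime] (ht : 2 < t) (hm : m = 2 * t)
    (F : Type) [Field F] [Fintype F] [DecidableEq F] [Algebra (ZMod p) F]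
    (hF : Fintype.card F = p ^ m)
    (E : Subfield F) (hE : Nat.card E = p ^ t)
    (α : Fˣ) (hα : ∀ x : Fˣ, x ∈ Subgroup.zpowers α)
    (Γ : Set F) (hΓ : Γ = {v : F | ∃ j ≤ p ^ t, v = (α : F) ^ j})
    (ζ : ℂ) (hζ : ζ = Complex.exp (2 * Real.pi * Complex.I / p))
    (χ : F → ℂ) (hχ : ∀ x, χ x = ζ ^ (Algebra.trace (ZMod p) F x).val)
    (Δ : Finset F) (hΔ : Δ = univ.filter (fun x : F => x ^ (p ^ t + 1) = 1))
    (S : ℂ) (hS : S = ∑ z ∈ ({0}ᶜ : Finset (ZMod p)), ∑ x ∈ Δ, χ (algebraMap (ZMod p) F z * x))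
    (wt : F → F → ℕ)
    (hwt : ∀ a b : F, wt a b = Set.ncard {xy : F × F | xy ≠ (0, 0) ∧
      Algebra.trace (ZMod p) F (xy.1 + xy.2 ^ (p ^ t - 1)) = 0 ∧
      Algebra.trace (ZMod p) F (a * xy.1 + b * xy.2) ≠ 0})
    (P : Set (F × F))
    (hP : P = {ab : F × F | (∃ z : ZMod p, z ≠ 0 ∧ algebraMap (ZMod p) F z = ab.1) ∧
      ab.2 ≠ 0 ∧ ∃ v ∈ Γ, Algebra.trace E F (ab.2 * v) = 0 ∧
        Algebra.trace (ZMod p) F (v ^ (p ^ t - 1)) ≠ 0}) :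
    (P.ncard : ℂ) = (((p : ℂ) ^ 2 - 2 * (p : ℂ) + 1) * ((p : ℂ) ^ m - 1)
        - ((p : ℂ) ^ (t + 1) - (p : ℂ) ^ t - (p : ℂ) + 1) * S) / p ∧
      ∀ ab ∈ P, (wt ab.1 ab.2 : ℂ) =
        ((p : ℂ) ^ (2 * m - 2) - (p : ℂ) ^ (m - 2)) * ((p : ℂ) - 1)
          + (p : ℂ) ^ (m - 2) * ((p : ℂ) ^ t + S) := by
  classical
  have hp1 : 1 < p := (Fact.out : p.Prime).one_lt
  have hn1 : 2 ≤ p ^ t := by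
    calc 2 = 2 ^ 1 := rfl
    _ ≤ p ^ t := Nat.pow_le_pow_left hp1 1 |>.trans (Nat.pow_le_pow_right (by omega) (by omega))
  have hnn : (p ^ t + 1) * (p ^ t - 1) = Fintype.card F - 1 := by
    rw [hF, hm, two_mul, pow_add]
    obtain ⟨k, hk⟩ := Nat.exists_eq_add_of_le hn1
    rw [hk]
    have h2 : (2 + k) * (2 + k) = k * k + 4 * k + 4 := by ring
    have h3 : (2 + k + 1) * (2 + k - 1) = k * k + 4 * k + 3 := by
      have : 2 + k - 1 = k + 1 := by omega
      rw [this]; ring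
    omega
  have hsn : (p ^ t - 1) * (p ^ t + 1) = Fintype.card F - 1 := by rw [← hnn]; ring
  have hd1 : 0 < p ^ t + 1 := by omega
  have hd2 : 0 < p ^ t - 1 := by omega
  have hcard2 : Fintype.card F = p ^ t * p ^ t := by rw [hF, hm, two_mul, pow_add]
  -- instances
  haveI hCharF : CharP F p := charP_of_injective_ringHom (algebraMap (ZMod p) F).injective p
  haveI hCharE : CharP ↥E p := E.subtype.charP Subtype.val_injective p
  haveI : Algebra (ZMod p) ↥E := ZMod.algebra _ p
  haveI : @IsScalarTower (ZMod p) ↥E F Algebra.toSMul Algebra.toSMul Algebra.toSMul :=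
    IsScalarTower.of_algebraMap_eq' (RingHom.ext_zmod _ _)
  have hEcard : Fintype.card ↥E = p ^ t := by rw [← Nat.card_eq_fintype_card]; exact hE
  -- traces
  have hTr_surj : Function.Surjective (Algebra.trace (ZMod p) F) := Algebra.trace_surjective _ _
  have hTrE_surj : Function.Surjective (Algebra.trace ↥E F) := Algebra.trace_surjective _ _
  have hTrEp_surj : Function.Surjective (Algebra.trace (ZMod p) ↥E) := Algebra.trace_surjective _ _
  have htrans : ∀ x : F, Algebra.trace (ZMod p) ↥E (Algebra.trace ↥E F x)
      = Algebra.trace (ZMod p) F x := fun x => Algebra.trace_trace x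
  have hTrZlin : ∀ (z : ZMod p) (x : F),
      Algebra.trace (ZMod p) F (algebraMap (ZMod p) F z * x) = z * Algebra.trace (ZMod p) F x := by
    intro z x
    rw [← Algebra.smul_def]
    simpa using ((Algebra.trace (ZMod p) F).map_smul z x)
  have hTrElin : ∀ (ε : ↥E) (x : F),
      Algebra.trace ↥E F ((ε : F) * x) = ε * Algebra.trace ↥E F x := by
    intro ε x
    have h1 : (ε : F) * x = ε • x := by rw [Algebra.smul_def]; rfl
    rw [h1]
    simpa using ((Algebra.trace ↥E F).map_smul ε x)
  -- fiber counts
  have hfibF : ∀ c : ZMod p,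
      (univ.filter fun x : F => Algebra.trace (ZMod p) F x = c).card * p = p ^ t * p ^ t := by
    intro c
    have := fiber_card (AddMonoidHom.mk' (fun x : F => Algebra.trace (ZMod p) F x)
      (fun a b => map_add _ a b)) (fun c => hTr_surj c) c
    simpa [ZMod.card, hcard2] using this
  have hfibE : ∀ c : ZMod p,
      (univ.filter fun ω : ↥E => Algebra.trace (ZMod p) ↥E ω = c).card * p = p ^ t := by
    intro c
    have := fiber_card (AddMonoidHom.mk' (fun ω : ↥E => Algebra.trace (ZMod p) ↥E ω)
      (fun a b => map_add _ a b)) (fun c => hTrEp_surj c) c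
    simpa [ZMod.card, hEcard] using this
  have hfibEcard : ∀ c : ZMod p,
      (univ.filter fun ω : ↥E => Algebra.trace (ZMod p) ↥E ω = c).card = p ^ (t - 1) := by
    intro c
    have h1 := hfibE c
    have h2 : p ^ t = p ^ (t - 1) * p := by
      rw [← pow_succ]; congr 1; omega
    rw [h2] at h1
    exact Nat.eq_of_mul_eq_mul_right (by omega) h1
  have hfibker : ∀ v : F, v ≠ 0 →
      (univ.filter fun y : F => Algebra.trace ↥E F (y * v) = 0).card = p ^ t := by
    intro v hv
    have hhom : ∀ a b : F, Algebra.trace ↥E F ((a + b) * v) =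
        Algebra.trace ↥E F (a * v) + Algebra.trace ↥E F (b * v) := by
      intro a b; rw [add_mul, map_add]
    have := fiber_card (AddMonoidHom.mk' (fun y : F => Algebra.trace ↥E F (y * v)) hhom)
      (by
        intro c
        obtain ⟨x, hx⟩ := hTrE_surj c
        exact ⟨x * v⁻¹, by simp [AddMonoidHom.mk'_apply, mul_assoc, inv_mul_cancel₀ hv, hx]⟩) 0
    rw [hEcard, hcard2] at this
    simp only [AddMonoidHom.mk'_apply] at this
    exact Nat.eq_of_mul_eq_mul_right (by omega) this

  -- cyclic structure
  have hΔcard : Δ.card = p ^ t + 1 := by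
    rw [hΔ]; exact my_filter_card α hα hnn hd1 hd2
  have hpow1 : ∀ c : ℕ, (α : F) ^ ((p ^ t + 1) * (p ^ t - 1) * c) = 1 := by
    intro c
    have h1 : α ^ ((p ^ t + 1) * (p ^ t - 1) * c) = 1 := by
      rw [pow_mul, hnn, ← my_horder α hα, pow_orderOf_eq_one, one_pow]
    have := congrArg Units.val h1
    rwa [Units.val_pow_eq_pow_val, Units.val_one] at this
  have hEiff : ∀ x : F, x ∈ E ↔ x ^ p ^ t = x := by
    have h0 : (0 : F) ∉ (univ.filter fun x : F => x ^ (p ^ t - 1) = 1) := by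
      simp only [mem_filter, mem_univ, true_and]
      rw [zero_pow (by omega : p ^ t - 1 ≠ 0)]
      exact zero_ne_one
    have hins : (univ.filter fun x : F => x ^ p ^ t = x)
        = insert (0 : F) (univ.filter fun x : F => x ^ (p ^ t - 1) = 1) := by
      ext x
      simp only [mem_filter, mem_univ, true_and, mem_insert]
      constructor
      · intro hx
        rcases eq_or_ne x 0 with rfl | hx0
        · exact Or.inl rfl
        · right
          have h2 : x ^ (p ^ t - 1) * x = 1 * x := by
            rw [one_mul, ← pow_succ]
            have h3 : p ^ t - 1 + 1 = p ^ t := by omega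
            rw [h3]; exact hx
          exact mul_right_cancel₀ hx0 h2
      · rintro (rfl | hx)
        · exact zero_pow (by omega)
        · have h3 : p ^ t = (p ^ t - 1) + 1 := by omega
          rw [h3, pow_succ, hx, one_mul]
    have hXcard : (univ.filter fun x : F => x ^ p ^ t = x).card = p ^ t := by
      rw [hins, Finset.card_insert_of_notMem h0, my_filter_card α hα hsn hd2 hd1]
      omega
    have hEfwd : ∀ x : F, x ∈ E → x ^ p ^ t = x := by
      intro x hx
      have h1 := FiniteField.pow_card (⟨x, hx⟩ : ↥E)
      rw [hEcard] at h1
      have h2 := congrArg (Subtype.val) h1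
      push_cast at h2
      exact h2
    intro x
    refine ⟨hEfwd x, ?_⟩
    intro hx
    have hsub : (univ.filter fun x : F => x ∈ E) ⊆ (univ.filter fun x : F => x ^ p ^ t = x) := by
      intro y hy
      rw [mem_filter] at hy ⊢
      exact ⟨mem_univ _, hEfwd y hy.2⟩
    have hEfin : (univ.filter fun x : F => x ∈ E).card = p ^ t := by
      have h1 := card_subfield_filter E (fun _ => True)
      simp only [and_true, Finset.filter_true] at h1
      rw [h1, card_univ, hEcard]
    have heq := Finset.eq_of_subset_of_card_le hsub (by rw [hXcard, hEfin])
    have hx2 : x ∈ univ.filter fun x : F => x ∈ E := by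
      rw [heq, mem_filter]; exact ⟨mem_univ _, hx⟩
    exact (mem_filter.1 hx2).2
  have hEfincard : (univ.filter fun x : F => x ∈ E).card = p ^ t := by
    have h1 := card_subfield_filter E (fun _ => True)
    simp only [and_true, Finset.filter_true] at h1
    rw [h1, card_univ, hEcard]
  have hEpow1 : ∀ e : F, e ∈ E → e ≠ 0 → e ^ (p ^ t - 1) = 1 := by
    intro e he he0
    have h1 : e ^ (p ^ t - 1) * e = 1 * e := by
      rw [one_mul, ← pow_succ]
      have h3 : p ^ t - 1 + 1 = p ^ t := by omega
      rw [h3]; exact (hEiff e).1 he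
    exact mul_right_cancel₀ he0 h1
  have hpow_fix : ∀ x : F, x ^ (p ^ t - 1) = 1 → x ^ p ^ t = x := by
    intro x hx
    have h3 : p ^ t = (p ^ t - 1) + 1 := by omega
    rw [h3, pow_succ, hx, one_mul]
  set ΓF : Finset F := (range (p ^ t + 1)).image (fun j => (α : F) ^ j) with hΓF
  have hmemΓ : ∀ v ∈ ΓF, ∃ j ≤ p ^ t, v = (α : F) ^ j := by
    intro v hv
    simp only [hΓF, mem_image, mem_range] at hv
    obtain ⟨j, hj, rfl⟩ := hv
    exact ⟨j, by omega, rfl⟩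
  have hΓcoe : Γ = ↑ΓF := by
    rw [hΓ, hΓF]
    ext v
    simp only [Set.mem_setOf_eq, Finset.coe_image, Set.mem_image, Finset.mem_coe,
      coe_range, Set.mem_Iio]
    constructor
    · rintro ⟨j, hj, rfl⟩; exact ⟨j, by omega, rfl⟩
    · rintro ⟨j, hj, rfl⟩; exact ⟨j, by omega, rfl⟩
  have hΓne0 : ∀ v ∈ ΓF, v ≠ 0 := by
    intro v hv
    obtain ⟨j, _, rfl⟩ := hmemΓ v hv
    have h1 : (α : F) ^ j = ((α ^ j : Fˣ) : F) := (Units.val_pow_eq_pow_val α j).symm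
    rw [h1]; exact Units.ne_zero _
  have hcardlt : ∀ j ≤ p ^ t, j * (p ^ t - 1) < Fintype.card F - 1 := by
    intro j hj
    calc j * (p ^ t - 1) ≤ p ^ t * (p ^ t - 1) := Nat.mul_le_mul_right _ hj
    _ < (p ^ t + 1) * (p ^ t - 1) := by
        exact (Nat.mul_lt_mul_right hd2).2 (by omega)
    _ = Fintype.card F - 1 := hnn
  have hΓpow_inj : ∀ v₁ ∈ ΓF, ∀ v₂ ∈ ΓF, v₁ ^ (p ^ t - 1) = v₂ ^ (p ^ t - 1) → v₁ = v₂ := by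
    intro v₁ h₁ v₂ h₂ he
    obtain ⟨j₁, hj₁, rfl⟩ := hmemΓ _ h₁
    obtain ⟨j₂, hj₂, rfl⟩ := hmemΓ _ h₂
    rw [← pow_mul, ← pow_mul] at he
    have h3 := my_alpha_inj α hα (hcardlt j₁ hj₁) (hcardlt j₂ hj₂) he
    have hj : j₁ = j₂ := Nat.eq_of_mul_eq_mul_right (by omega) h3
    rw [hj]
  have hΓmapΔ : ∀ v ∈ ΓF, v ^ (p ^ t - 1) ∈ Δ := by
    intro v hv
    obtain ⟨j, hj, rfl⟩ := hmemΓ _ hv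
    rw [hΔ, mem_filter]
    refine ⟨mem_univ _, ?_⟩
    have h1 : (((α : F) ^ j) ^ (p ^ t - 1)) ^ (p ^ t + 1)
        = (α : F) ^ ((p ^ t + 1) * (p ^ t - 1) * j) := by
      rw [← pow_mul, ← pow_mul]
      congr 1
      ring
    rw [h1]
    exact hpow1 j
  have hΓonto : ∀ x ∈ Δ, ∃ v ∈ ΓF, v ^ (p ^ t - 1) = x := by
    intro x hx
    rw [hΔ, mem_filter] at hx
    obtain ⟨j, hj, rfl⟩ := (my_pow_eq_one_iff α hα hnn hd1 hd2 x).1 hx.2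
    refine ⟨(α : F) ^ j, ?_, ?_⟩
    · simp only [hΓF, mem_image, mem_range]; exact ⟨j, by omega, rfl⟩
    · rw [← pow_mul]
  have hT0eq : (ΓF.filter fun v => Algebra.trace (ZMod p) F (v ^ (p ^ t - 1)) = 0).card
      = (Δ.filter fun x => Algebra.trace (ZMod p) F x = 0).card := by
    apply Finset.card_bij (fun v _ => v ^ (p ^ t - 1))
    · intro v hv
      rw [mem_filter] at hv ⊢
      exact ⟨hΓmapΔ v hv.1, hv.2⟩
    · intro v₁ h₁ v₂ h₂ he
      rw [mem_filter] at h₁ h₂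
      exact hΓpow_inj v₁ h₁.1 v₂ h₂.1 he
    · intro x hx
      rw [mem_filter] at hx
      obtain ⟨v, hv, rfl⟩ := hΓonto x hx.1
      exact ⟨v, mem_filter.2 ⟨hv, hx.2⟩, rfl⟩
  have hΓcard : ΓF.card = p ^ t + 1 := by
    rw [hΓF, Finset.card_image_of_injOn, card_range]
    intro j₁ h₁ j₂ h₂ he
    simp only [coe_range, Set.mem_Iio] at h₁ h₂
    refine my_alpha_inj α hα ?_ ?_ he
    · calc j₁ < p ^ t + 1 := h₁
      _ ≤ (p ^ t + 1) * (p ^ t - 1) := Nat.le_mul_of_pos_right _ hd2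
      _ = Fintype.card F - 1 := hnn
    · calc j₂ < p ^ t + 1 := h₂
      _ ≤ (p ^ t + 1) * (p ^ t - 1) := Nat.le_mul_of_pos_right _ hd2
      _ = Fintype.card F - 1 := hnn
  have hdec : ∀ y : F, y ≠ 0 → ∃ v ∈ ΓF, ∃ e : F, e ∈ E ∧ e ≠ 0 ∧ y = v * e := by
    intro y hy
    obtain ⟨k, hk⟩ := mem_powers_iff_mem_zpowers.2 (hα (Units.mk0 y hy))
    have hky : (α : F) ^ k = y := by
      have h1 := congrArg Units.val hk
      rwa [Units.val_pow_eq_pow_val, Units.val_mk0] at h1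
    have hjlt : k % (p ^ t + 1) < p ^ t + 1 := Nat.mod_lt _ hd1
    have hjk : k % (p ^ t + 1) ≤ k := Nat.mod_le _ _
    have hmd := Nat.mod_add_div k (p ^ t + 1)
    have hαne : ∀ i : ℕ, (α : F) ^ i ≠ 0 := by
      intro i
      rw [(Units.val_pow_eq_pow_val α i).symm]
      exact Units.ne_zero _
    refine ⟨(α : F) ^ (k % (p ^ t + 1)), ?_, (α : F) ^ (k - k % (p ^ t + 1)), ?_, hαne _, ?_⟩
    · simp only [hΓF, mem_image, mem_range]; exact ⟨k % (p ^ t + 1), hjlt, rfl⟩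
    · apply (hEiff _).2
      apply hpow_fix
      rw [← pow_mul]
      have h2 : (k - k % (p ^ t + 1)) * (p ^ t - 1)
          = (p ^ t + 1) * (p ^ t - 1) * (k / (p ^ t + 1)) := by
        have h3 : k - k % (p ^ t + 1) = (p ^ t + 1) * (k / (p ^ t + 1)) := by omega
        rw [h3]; ring
      rw [h2]
      exact hpow1 _
    · rw [← pow_add]
      have h4 : k % (p ^ t + 1) + (k - k % (p ^ t + 1)) = k := by omega
      rw [h4, hky]
  have huniq2 : ∀ v₁ ∈ ΓF, ∀ v₂ ∈ ΓF, ∀ e : F, e ∈ E → e ≠ 0 → v₂ = v₁ * e → v₁ = v₂ := by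
    intro v₁ h₁ v₂ h₂ e he he0 hv
    apply hΓpow_inj v₁ h₁ v₂ h₂
    rw [hv, mul_pow, hEpow1 e he he0, mul_one]
  have hker : ∀ b : F, b ≠ 0 → ∀ v₁ ∈ ΓF, ∀ v₂ ∈ ΓF,
      Algebra.trace ↥E F (b * v₁) = 0 → Algebra.trace ↥E F (b * v₂) = 0 → v₁ = v₂ := by
    intro b hb v₁ h₁ v₂ h₂ ht₁ ht₂
    have hv₁0 := hΓne0 v₁ h₁
    have hKbcard : (univ.filter fun y : F => Algebra.trace ↥E F (y * b) = 0).card = p ^ t :=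
      hfibker b hb
    have hEvcard : ((univ.filter fun x : F => x ∈ E).image (fun e => e * v₁)).card = p ^ t := by
      rw [Finset.card_image_of_injective _ (mul_left_injective₀ hv₁0), hEfincard]
    have hsub : (univ.filter fun x : F => x ∈ E).image (fun e => e * v₁)
        ⊆ (univ.filter fun y : F => Algebra.trace ↥E F (y * b) = 0) := by
      intro x hx
      simp only [mem_image, mem_filter, mem_univ, true_and] at hx ⊢
      obtain ⟨e, he, rfl⟩ := hx
      have h3 : e * v₁ * b = e * (v₁ * b) := by ring
      have h5 : Algebra.trace ↥E F (e * (v₁ * b))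
          = (⟨e, he⟩ : ↥E) * Algebra.trace ↥E F (v₁ * b) := hTrElin ⟨e, he⟩ (v₁ * b)
      rw [h3, h5, show Algebra.trace ↥E F (v₁ * b) = 0 by rw [mul_comm]; exact ht₁, mul_zero]
    have heq := Finset.eq_of_subset_of_card_le hsub (by rw [hKbcard, hEvcard])
    have hv₂Kb : v₂ ∈ (univ.filter fun y : F => Algebra.trace ↥E F (y * b) = 0) := by
      simp only [mem_filter, mem_univ, true_and]; rw [mul_comm]; exact ht₂
    rw [← heq] at hv₂Kb
    simp only [mem_image, mem_filter, mem_univ, true_and] at hv₂Kb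
    obtain ⟨e, he, hev⟩ := hv₂Kb
    have he0 : e ≠ 0 := by
      rintro rfl; rw [zero_mul] at hev; exact hΓne0 v₂ h₂ hev.symm
    exact huniq2 v₁ h₁ v₂ h₂ e he he0 (by rw [← hev, mul_comm])
  -- value of S
  have hζprim : IsPrimitiveRoot ζ p := by
    rw [hζ]; exact Complex.isPrimitiveRoot_exp p (by omega)
  set T₀ := (Δ.filter fun x => Algebra.trace (ZMod p) F x = 0).card with hT₀def
  have hT₀Δ : T₀ + (Δ.filter fun x => ¬ Algebra.trace (ZMod p) F x = 0).card = p ^ t + 1 := by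
    rw [hT₀def, Finset.card_filter_add_card_filter_not, hΔcard]
  have hT₀le : T₀ ≤ p ^ t + 1 := by omega
  have hSval : S = p * (T₀ : ℂ) - ((p : ℂ) ^ t + 1) := by
    rw [hS, Finset.sum_comm]
    have hsum : ∀ x ∈ Δ, (∑ z ∈ ({0}ᶜ : Finset (ZMod p)), χ (algebraMap (ZMod p) F z * x))
        = if Algebra.trace (ZMod p) F x = 0 then ((p : ℂ) - 1) else -1 := by
      intro x _
      rw [Finset.sum_congr rfl (fun z _ => by rw [hχ, hTrZlin])]
      exact zmod_char_sum p ζ hζprim _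
    rw [Finset.sum_congr rfl hsum, Finset.sum_ite, Finset.sum_const, Finset.sum_const]
    have hc2 : (Δ.filter fun x => ¬ Algebra.trace (ZMod p) F x = 0).card = p ^ t + 1 - T₀ := by
      omega
    rw [hc2]
    simp only [nsmul_eq_mul]
    rw [Nat.cast_sub hT₀le]
    push_cast
    ring
  -- Part 1: counting P
  set A := univ.filter (fun x : F => ∃ z : ZMod p, z ≠ 0 ∧ algebraMap (ZMod p) F z = x) with hA
  set B := univ.filter (fun b : F => b ≠ 0 ∧ ∃ v ∈ ΓF, Algebra.trace ↥E F (b * v) = 0 ∧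
      Algebra.trace (ZMod p) F (v ^ (p ^ t - 1)) ≠ 0) with hB
  have hPeq : P = ↑(A ×ˢ B) := by
    rw [hP, hΓcoe]
    ext ab
    constructor
    · rintro ⟨h1, h2, v, hv, h3, h4⟩
      rw [Finset.mem_coe, Finset.mem_product]
      refine ⟨by rw [hA, mem_filter]; exact ⟨mem_univ _, h1⟩, ?_⟩
      rw [hB, mem_filter]
      exact ⟨mem_univ _, h2, v, Finset.mem_coe.1 hv, h3, h4⟩
    · intro h
      rw [Finset.mem_coe, Finset.mem_product] at h
      obtain ⟨ha, hb⟩ := h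
      rw [hA, mem_filter] at ha
      rw [hB, mem_filter] at hb
      obtain ⟨_, h2, v, hv, h3, h4⟩ := hb
      exact ⟨ha.2, h2, v, Finset.mem_coe.2 hv, h3, h4⟩
  have hAcard : A.card = p - 1 := by
    have himg : A = ({0}ᶜ : Finset (ZMod p)).image (algebraMap (ZMod p) F) := by
      ext x
      simp only [hA, mem_filter, mem_univ, true_and, mem_image, Finset.mem_compl,
        Finset.mem_singleton]
    rw [himg, Finset.card_image_of_injective _ (algebraMap (ZMod p) F).injective,
      Finset.card_compl, Finset.card_singleton, ZMod.card]
  have hBcount : ∀ v ∈ ΓF,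
      (univ.filter fun b : F => b ≠ 0 ∧ Algebra.trace ↥E F (b * v) = 0).card = p ^ t - 1 := by
    intro v hv
    have hv0 := hΓne0 v hv
    have hbig : (univ.filter fun b : F => Algebra.trace ↥E F (b * v) = 0).card = p ^ t :=
      hfibker v hv0
    have hsplit := Finset.card_filter_add_card_filter_not
      (s := univ.filter fun b : F => Algebra.trace ↥E F (b * v) = 0) (p := fun b => b = 0)
    have hz : ((univ.filter fun b : F => Algebra.trace ↥E F (b * v) = 0).filter
        (fun b => b = 0)).card = 1 := by
      rw [Finset.card_eq_one]
      refine ⟨0, ?_⟩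
      ext b
      simp only [mem_filter, mem_univ, true_and, Finset.mem_singleton]
      constructor
      · rintro ⟨_, rfl⟩; rfl
      · rintro rfl; exact ⟨by rw [zero_mul, map_zero], rfl⟩
    have hgoal : ((univ.filter fun b : F => Algebra.trace ↥E F (b * v) = 0).filter
        (fun b => ¬ b = 0)).card = p ^ t - 1 := by omega
    rw [← hgoal]
    congr 1
    ext b
    simp only [mem_filter, mem_univ, true_and, Finset.filter_filter]
    tauto
  have hBcard : B.card = (ΓF.filter fun v =>
      ¬ Algebra.trace (ZMod p) F (v ^ (p ^ t - 1)) = 0).card * (p ^ t - 1) := by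
    have hbi : B = (ΓF.filter fun v =>
        ¬ Algebra.trace (ZMod p) F (v ^ (p ^ t - 1)) = 0).biUnion
        (fun v => univ.filter fun b : F => b ≠ 0 ∧ Algebra.trace ↥E F (b * v) = 0) := by
      ext b
      rw [hB, mem_filter, Finset.mem_biUnion]
      constructor
      · rintro ⟨_, hb0, v, hv, h3, h4⟩
        exact ⟨v, mem_filter.2 ⟨hv, h4⟩, mem_filter.2 ⟨mem_univ _, hb0, h3⟩⟩
      · rintro ⟨v, hv, hb⟩
        rw [mem_filter] at hv hb
        exact ⟨mem_univ _, hb.2.1, v, hv.1, hb.2.2, hv.2⟩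
    rw [hbi, Finset.card_biUnion]
    · rw [Finset.sum_congr rfl (fun v hv => hBcount v (mem_filter.1 hv).1), Finset.sum_const,
        smul_eq_mul]
    · intro v₁ h₁ v₂ h₂ hne
      rw [Function.onFun, Finset.disjoint_left]
      intro b hb1 hb2
      rw [mem_filter] at hb1 hb2
      exact hne (hker b hb1.2.1 v₁ (mem_filter.1 h₁).1 v₂ (mem_filter.1 h₂).1 hb1.2.2 hb2.2.2)
  have hT1sum : (ΓF.filter fun v =>
      ¬ Algebra.trace (ZMod p) F (v ^ (p ^ t - 1)) = 0).card + T₀ = p ^ t + 1 := by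
    have h1 := Finset.card_filter_add_card_filter_not
      (s := ΓF) (p := fun v => Algebra.trace (ZMod p) F (v ^ (p ^ t - 1)) = 0)
    rw [hΓcard] at h1
    have h2 : (ΓF.filter fun v => Algebra.trace (ZMod p) F (v ^ (p ^ t - 1)) = 0).card = T₀ := by
      rw [hT₀def]; exact hT0eq
    omega
  have hPn : P.ncard = (p - 1) * ((ΓF.filter fun v =>
      ¬ Algebra.trace (ZMod p) F (v ^ (p ^ t - 1)) = 0).card * (p ^ t - 1)) := by
    rw [hPeq, Set.ncard_coe_finset, Finset.card_product, hAcard, hBcard]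
  have hp0 : (p : ℂ) ≠ 0 := Nat.cast_ne_zero.2 (by omega)
  have hpm : (p : ℂ) ^ m = (p : ℂ) ^ t * (p : ℂ) ^ t := by rw [hm, two_mul, pow_add]
  have hpt1 : (p : ℂ) ^ (t + 1) = (p : ℂ) ^ t * p := pow_succ _ _
  have hT₁C : (((ΓF.filter fun v =>
      ¬ Algebra.trace (ZMod p) F (v ^ (p ^ t - 1)) = 0).card : ℕ) : ℂ)
      = (p : ℂ) ^ t + 1 - (T₀ : ℂ) := by
    have h2 : ((((ΓF.filter fun v =>
        ¬ Algebra.trace (ZMod p) F (v ^ (p ^ t - 1)) = 0).card + T₀ : ℕ)) : ℂ)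
        = ((p ^ t + 1 : ℕ) : ℂ) := by rw [hT1sum]
    push_cast at h2
    linear_combination h2
  constructor
  · rw [hPn]
    push_cast [Nat.cast_sub (show 1 ≤ p by omega), Nat.cast_sub (show 1 ≤ p ^ t by omega)]
    rw [hT₁C, hSval, hpm, hpt1, eq_div_iff hp0]
    ring
  · -- Part 2: the weight formula
    rintro ⟨a, b⟩ hab
    rw [hP] at hab
    obtain ⟨⟨z, hz0, hza⟩, hb0, v, hvΓ, hvtr, hvne⟩ := hab
    have hza' : algebraMap (ZMod p) F z = a := hza
    have hb0' : (b : F) ≠ 0 := hb0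
    have hvbtr : Algebra.trace ↥E F (b * v) = 0 := hvtr
    have hvne' : Algebra.trace (ZMod p) F (v ^ (p ^ t - 1)) ≠ 0 := hvne
    rw [hΓcoe, Finset.mem_coe] at hvΓ
    show ((wt a b : ℕ) : ℂ) = _
    rw [hwt a b]
    set Dall := univ.filter (fun xy : F × F =>
      Algebra.trace (ZMod p) F (xy.1 + xy.2 ^ (p ^ t - 1)) = 0) with hDall
    set Zall := Dall.filter (fun xy : F × F =>
      Algebra.trace (ZMod p) F (a * xy.1 + b * xy.2) = 0) with hZall
    set W := Dall.filter (fun xy : F × F =>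
      ¬ Algebra.trace (ZMod p) F (a * xy.1 + b * xy.2) = 0) with hWdef
    have hWset : {xy : F × F | xy ≠ (0, 0) ∧
        Algebra.trace (ZMod p) F (xy.1 + xy.2 ^ (p ^ t - 1)) = 0 ∧
        Algebra.trace (ZMod p) F (a * xy.1 + b * xy.2) ≠ 0} = ↑W := by
      ext xy
      simp only [Set.mem_setOf_eq, hWdef, hDall, Finset.mem_coe, mem_filter, mem_univ, true_and]
      constructor
      · rintro ⟨h1, h2, h3⟩; exact ⟨h2, h3⟩
      · rintro ⟨h2, h3⟩
        refine ⟨?_, h2, h3⟩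
        rintro rfl
        apply h3
        show Algebra.trace (ZMod p) F (a * 0 + b * 0) = 0
        rw [mul_zero, mul_zero, add_zero, map_zero]
    rw [hWset, Set.ncard_coe_finset]
    have hWZD : Zall.card + W.card = Dall.card := by
      rw [hZall, hWdef]; exact Finset.card_filter_add_card_filter_not _
    set K := univ.filter (fun u : F => Algebra.trace (ZMod p) F u = 0) with hK
    have hKcard : K.card * p = p ^ t * p ^ t := hfibF 0
    have hDcard : Dall.card = K.card * (p ^ t * p ^ t) := by
      have hbij : Dall.card = (K ×ˢ (univ : Finset F)).card := by
        apply Finset.card_nbij' (fun xy => (xy.1 + xy.2 ^ (p ^ t - 1), xy.2))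
          (fun uy => (uy.1 - uy.2 ^ (p ^ t - 1), uy.2))
        · intro xy hxy
          simp only [Finset.mem_coe] at hxy ⊢
          rw [hDall, mem_filter] at hxy
          rw [Finset.mem_product]
          exact ⟨by rw [hK, mem_filter]; exact ⟨mem_univ _, hxy.2⟩, mem_univ _⟩
        · intro uy huy
          simp only [Finset.mem_coe] at huy ⊢
          rw [Finset.mem_product, hK, mem_filter] at huy
          rw [hDall, mem_filter]
          refine ⟨mem_univ _, ?_⟩
          simpa using huy.1.2
        · intro xy _; simp
        · intro uy _; simp
      rw [hbij, Finset.card_product, Finset.card_univ, hcard2]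
    set Mf := univ.filter (fun y : F => Algebra.trace (ZMod p) F (b * y)
      = z * Algebra.trace (ZMod p) F (y ^ (p ^ t - 1))) with hMf
    have hZcard : Zall.card = K.card * Mf.card := by
      have hbij : Zall.card = (K ×ˢ Mf).card := by
        apply Finset.card_nbij' (fun xy => (xy.1 + xy.2 ^ (p ^ t - 1), xy.2))
          (fun uy => (uy.1 - uy.2 ^ (p ^ t - 1), uy.2))
        · intro xy hxy
          simp only [Finset.mem_coe] at hxy ⊢
          rw [hZall, mem_filter, hDall, mem_filter] at hxy
          obtain ⟨⟨_, h1⟩, h2⟩ := hxy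
          rw [Finset.mem_product]
          constructor
          · rw [hK, mem_filter]; exact ⟨mem_univ _, h1⟩
          · rw [hMf, mem_filter]
            refine ⟨mem_univ _, ?_⟩
            have e1 : Algebra.trace (ZMod p) F xy.1
                + Algebra.trace (ZMod p) F (xy.2 ^ (p ^ t - 1)) = 0 := by
              rw [← map_add]; exact h1
            have e2 : z * Algebra.trace (ZMod p) F xy.1
                + Algebra.trace (ZMod p) F (b * xy.2) = 0 := by
              rw [← hTrZlin, ← map_add, hza']
              exact h2
            linear_combination e2 - z * e1
        · intro uy huy
          simp only [Finset.mem_coe] at huy ⊢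
          rw [Finset.mem_product, hK, mem_filter, hMf, mem_filter] at huy
          obtain ⟨⟨_, h1⟩, _, h2⟩ := huy
          rw [hZall, mem_filter, hDall, mem_filter]
          refine ⟨⟨mem_univ _, by simpa using h1⟩, ?_⟩
          have e3 : Algebra.trace (ZMod p) F (a * (uy.1 - uy.2 ^ (p ^ t - 1)) + b * uy.2)
              = z * Algebra.trace (ZMod p) F uy.1
                - z * Algebra.trace (ZMod p) F (uy.2 ^ (p ^ t - 1))
                + Algebra.trace (ZMod p) F (b * uy.2) := by
            rw [← hza', mul_sub, map_add, map_sub, hTrZlin, hTrZlin]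
          show Algebra.trace (ZMod p) F (a * (uy.1 - uy.2 ^ (p ^ t - 1)) + b * uy.2) = 0
          rw [e3, h1, h2]
          ring
        · intro xy _; simp
        · intro uy _; simp
      rw [hbij, Finset.card_product]
    have hMcard : Mf.card + T₀ = 1 + p ^ t * p ^ (t - 1) := by
      set C : F → Finset F := fun v' => Mf.filter (fun y => ∃ e : F, e ∈ E ∧ e ≠ 0 ∧ y = v' * e)
        with hC
      have h0Mf : (0 : F) ∈ Mf := by
        rw [hMf, mem_filter]
        refine ⟨mem_univ _, ?_⟩
        rw [mul_zero, map_zero, zero_pow (by omega : p ^ t - 1 ≠ 0), map_zero, mul_zero]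
      have h0nB : (0 : F) ∉ ΓF.biUnion C := by
        intro h0
        rw [Finset.mem_biUnion] at h0
        obtain ⟨v', hv', h0C⟩ := h0
        obtain ⟨e, he, he0, hve⟩ := (mem_filter.1 h0C).2
        exact (mul_ne_zero (hΓne0 v' hv') he0) hve.symm
      have hMsplit : Mf = insert 0 (ΓF.biUnion C) := by
        ext y
        rw [Finset.mem_insert, Finset.mem_biUnion]
        constructor
        · intro hy
          rcases eq_or_ne y 0 with rfl | hy0
          · exact Or.inl rfl
          · right
            obtain ⟨v', hv', e, he, he0, rfl⟩ := hdec y hy0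
            exact ⟨v', hv', mem_filter.2 ⟨hy, e, he, he0, rfl⟩⟩
        · rintro (rfl | ⟨v', hv', hyC⟩)
          · exact h0Mf
          · exact (mem_filter.1 hyC).1
      have hdisj : ∀ v₁ ∈ ΓF, ∀ v₂ ∈ ΓF, v₁ ≠ v₂ → Disjoint (C v₁) (C v₂) := by
        intro v₁ h₁ v₂ h₂ hne
        rw [Finset.disjoint_left]
        intro y hy1 hy2
        obtain ⟨e₁, he₁, he₁0, hye₁⟩ := (mem_filter.1 hy1).2
        obtain ⟨e₂, he₂, he₂0, hye₂⟩ := (mem_filter.1 hy2).2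
        apply hne
        apply huniq2 v₁ h₁ v₂ h₂ (e₁ * e₂⁻¹) (E.mul_mem he₁ (E.inv_mem he₂))
          (mul_ne_zero he₁0 (inv_ne_zero he₂0))
        have h3 : v₁ * e₁ = v₂ * e₂ := by rw [← hye₁, ← hye₂]
        field_simp
        linear_combination -h3
      have hCv : ∀ v' ∈ ΓF, v' ≠ v → (C v').card
          + (if Algebra.trace (ZMod p) F (v' ^ (p ^ t - 1)) = 0 then 1 else 0)
          = p ^ (t - 1) := by
        intro v' hv' hne
        have hv'0 := hΓne0 v' hv'
        have hw : Algebra.trace ↥E F (b * v') ≠ 0 := by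
          intro h0
          exact hne (hker b hb0' v' hv' v hvΓ h0 hvbtr)
        have hstep1 : (C v').card = (univ.filter fun e : F => e ∈ E ∧ (e ≠ 0 ∧
            Algebra.trace (ZMod p) F (b * (v' * e))
              = z * Algebra.trace (ZMod p) F (v' ^ (p ^ t - 1)))).card := by
          apply Finset.card_nbij' (fun y => v'⁻¹ * y) (fun e => v' * e)
          · intro y hy
            obtain ⟨hyM, e, he, he0, rfl⟩ := mem_filter.1 hy
            simp only [Finset.mem_coe]
            rw [mem_filter, inv_mul_cancel_left₀ hv'0]
            refine ⟨mem_univ _, he, he0, ?_⟩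
            rw [hMf, mem_filter] at hyM
            have h5 : (v' * e) ^ (p ^ t - 1) = v' ^ (p ^ t - 1) := by
              rw [mul_pow, hEpow1 e he he0, mul_one]
            rw [← h5]
            exact hyM.2
          · intro e hee
            obtain ⟨_, he, he0, hcond⟩ := mem_filter.1 hee
            simp only [Finset.mem_coe]
            rw [mem_filter]
            constructor
            · rw [hMf, mem_filter]
              refine ⟨mem_univ _, ?_⟩
              have h5 : (v' * e) ^ (p ^ t - 1) = v' ^ (p ^ t - 1) := by
                rw [mul_pow, hEpow1 e he he0, mul_one]
              rw [h5]
              exact hcond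
            · exact ⟨e, he, he0, rfl⟩
          · intro y _; dsimp only; rw [mul_inv_cancel_left₀ hv'0]
          · intro e _; dsimp only; rw [inv_mul_cancel_left₀ hv'0]
        have hstep2 : (C v').card = (univ.filter fun ε : ↥E => ((ε : F) ≠ 0 ∧
            Algebra.trace (ZMod p) F (b * (v' * (ε : F)))
              = z * Algebra.trace (ZMod p) F (v' ^ (p ^ t - 1)))).card := by
          rw [hstep1]
          have hcs := card_subfield_filter E (fun e : F => e ≠ 0 ∧
            Algebra.trace (ZMod p) F (b * (v' * e))
              = z * Algebra.trace (ZMod p) F (v' ^ (p ^ t - 1)))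
          exact hcs
        have hrew : ∀ ε : ↥E, Algebra.trace (ZMod p) F (b * (v' * (ε : F)))
            = Algebra.trace (ZMod p) ↥E (ε * Algebra.trace ↥E F (b * v')) := by
          intro ε
          have h6 : b * (v' * (ε : F)) = (ε : F) * (b * v') := by ring
          rw [h6, ← htrans, hTrElin]
        have hstep3 : (C v').card = (univ.filter fun ε : ↥E => ((ε : F) ≠ 0 ∧
            Algebra.trace (ZMod p) ↥E (ε * Algebra.trace ↥E F (b * v'))
              = z * Algebra.trace (ZMod p) F (v' ^ (p ^ t - 1)))).card := by
          rw [hstep2]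
          congr 1
          apply Finset.filter_congr
          intro ε _
          rw [hrew ε]
        have hstep4 : (C v').card = (univ.filter fun ω : ↥E => ((ω : F) ≠ 0 ∧
            Algebra.trace (ZMod p) ↥E ω
              = z * Algebra.trace (ZMod p) F (v' ^ (p ^ t - 1)))).card := by
          rw [hstep3]
          apply Finset.card_nbij' (fun ε => ε * Algebra.trace ↥E F (b * v'))
            (fun ω => ω * (Algebra.trace ↥E F (b * v'))⁻¹)
          · intro ε hε
            obtain ⟨_, hε0, hεc⟩ := mem_filter.1 hε
            simp only [Finset.mem_coe]
            rw [mem_filter]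
            refine ⟨mem_univ _, ?_, hεc⟩
            push_cast
            exact mul_ne_zero hε0 (fun h => hw (by exact_mod_cast h))
          · intro ω hω
            obtain ⟨_, hω0, hωc⟩ := mem_filter.1 hω
            simp only [Finset.mem_coe]
            rw [mem_filter]
            refine ⟨mem_univ _, ?_, ?_⟩
            · push_cast
              refine mul_ne_zero hω0 (inv_ne_zero ?_)
              exact fun h => hw (by exact_mod_cast h)
            · rw [mul_assoc, inv_mul_cancel₀ hw, mul_one]
              exact hωc
          · intro ε _
            dsimp only
            rw [mul_assoc, mul_inv_cancel₀ hw, mul_one]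
          · intro ω _
            dsimp only
            rw [mul_assoc, inv_mul_cancel₀ hw, mul_one]
        by_cases hc : Algebra.trace (ZMod p) F (v' ^ (p ^ t - 1)) = 0
        · rw [if_pos hc]
          simp only [hc, mul_zero] at hstep4
          have hbig : (univ.filter fun ω : ↥E => Algebra.trace (ZMod p) ↥E ω = 0)
              = insert (0 : ↥E) (univ.filter fun ω : ↥E => ((ω : F) ≠ 0 ∧
                Algebra.trace (ZMod p) ↥E ω = 0)) := by
            ext ω
            simp only [mem_filter, mem_univ, true_and, Finset.mem_insert]
            constructor
            · intro hω
              rcases eq_or_ne ω 0 with rfl | hω0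
              · exact Or.inl rfl
              · exact Or.inr ⟨fun h => hω0 (by exact_mod_cast h), hω⟩
            · rintro (rfl | ⟨_, hω⟩)
              · exact map_zero _
              · exact hω
          have h0nin : (0 : ↥E) ∉ (univ.filter fun ω : ↥E => ((ω : F) ≠ 0 ∧
              Algebra.trace (ZMod p) ↥E ω = 0)) := by
            simp
          have hb2 := hfibEcard 0
          rw [hbig, Finset.card_insert_of_notMem h0nin] at hb2
          rw [hstep4]
          omega
        · rw [if_neg hc, add_zero, hstep4]
          have hcne : z * Algebra.trace (ZMod p) F (v' ^ (p ^ t - 1)) ≠ 0 :=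
            mul_ne_zero hz0 hc
          have heqf : (univ.filter fun ω : ↥E => ((ω : F) ≠ 0 ∧
              Algebra.trace (ZMod p) ↥E ω
                = z * Algebra.trace (ZMod p) F (v' ^ (p ^ t - 1))))
              = (univ.filter fun ω : ↥E => Algebra.trace (ZMod p) ↥E ω
                = z * Algebra.trace (ZMod p) F (v' ^ (p ^ t - 1))) := by
            ext ω
            simp only [mem_filter, mem_univ, true_and]
            constructor
            · rintro ⟨_, h⟩; exact h
            · intro h
              refine ⟨?_, h⟩
              intro hω0
              apply hcne
              rw [← h]
              have : ω = 0 := by exact_mod_cast hω0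
              rw [this, map_zero]
          rw [heqf]
          exact hfibEcard _
      have hCv0 : (C v).card = 0 := by
        rw [Finset.card_eq_zero, Finset.eq_empty_iff_forall_notMem]
        intro y hy
        obtain ⟨hyM, e, he, he0, rfl⟩ := mem_filter.1 hy
        rw [hMf, mem_filter] at hyM
        have h5 : (v * e) ^ (p ^ t - 1) = v ^ (p ^ t - 1) := by
          rw [mul_pow, hEpow1 e he he0, mul_one]
        have h6 : Algebra.trace (ZMod p) F (b * (v * e)) = 0 := by
          rw [show b * (v * e) = e * (b * v) from by ring, ← htrans,
            show Algebra.trace ↥E F (e * (b * v))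
              = (⟨e, he⟩ : ↥E) * Algebra.trace ↥E F (b * v) from hTrElin ⟨e, he⟩ _,
            hvbtr, mul_zero, map_zero]
        rw [h6, h5] at hyM
        have h7 := hyM.2
        exact hvne' ((mul_eq_zero.1 h7.symm).resolve_left hz0)
      have hsum1 : ∑ v' ∈ ΓF.erase v, (C v').card = ∑ v' ∈ ΓF, (C v').card :=
        Finset.sum_erase _ hCv0
      have hsum2 : (∑ v' ∈ ΓF.erase v, (C v').card)
          + (∑ v' ∈ ΓF.erase v, (if Algebra.trace (ZMod p) F (v' ^ (p ^ t - 1)) = 0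
              then 1 else 0))
          = (ΓF.erase v).card * p ^ (t - 1) := by
        rw [← Finset.sum_add_distrib]
        rw [Finset.sum_congr rfl (fun v' hv' => hCv v' (Finset.mem_of_mem_erase hv')
          (Finset.ne_of_mem_erase hv'))]
        rw [Finset.sum_const, smul_eq_mul]
      have hsum3 : (∑ v' ∈ ΓF.erase v, (if Algebra.trace (ZMod p) F (v' ^ (p ^ t - 1)) = 0
          then (1 : ℕ) else 0)) = T₀ := by
        rw [Finset.sum_boole, Nat.cast_id]
        have h9 : (ΓF.erase v).filter
            (fun v' => Algebra.trace (ZMod p) F (v' ^ (p ^ t - 1)) = 0)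
            = ΓF.filter (fun v' => Algebra.trace (ZMod p) F (v' ^ (p ^ t - 1)) = 0) := by
          rw [Finset.filter_erase, Finset.erase_eq_of_notMem]
          intro h
          exact hvne' (mem_filter.1 h).2
        rw [h9, hT₀def]
        exact hT0eq
      have hercard : (ΓF.erase v).card = p ^ t := by
        rw [Finset.card_erase_of_mem hvΓ, hΓcard]
        omega
      have hMfcard : Mf.card = (ΓF.biUnion C).card + 1 := by
        rw [hMsplit, Finset.card_insert_of_notMem h0nB]
      have hbicard : (ΓF.biUnion C).card = ∑ v' ∈ ΓF, (C v').card :=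
        Finset.card_biUnion hdisj
      rw [hercard] at hsum2
      omega
    -- final computation
    have hWC : (W.card : ℂ) = (Dall.card : ℂ) - (Zall.card : ℂ) := by
      have h10 : ((Zall.card + W.card : ℕ) : ℂ) = (Dall.card : ℂ) := by rw [hWZD]
      push_cast at h10
      linear_combination h10
    have hDC : (Dall.card : ℂ) = (K.card : ℂ) * ((p : ℂ) ^ t * (p : ℂ) ^ t) := by
      rw [hDcard]; push_cast; ring
    have hZC : (Zall.card : ℂ) = (K.card : ℂ) * (Mf.card : ℂ) := by
      rw [hZcard]; push_cast; ring
    have hKC : (K.card : ℂ) * p = (p : ℂ) ^ t * (p : ℂ) ^ t := by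
      have h11 : ((K.card * p : ℕ) : ℂ) = ((p ^ t * p ^ t : ℕ) : ℂ) := by rw [hKcard]
      push_cast at h11
      exact h11
    have hMC : (Mf.card : ℂ) + (T₀ : ℂ) = 1 + (p : ℂ) ^ t * (p : ℂ) ^ (t - 1) := by
      have h12 : ((Mf.card + T₀ : ℕ) : ℂ) = ((1 + p ^ t * p ^ (t - 1) : ℕ) : ℂ) := by
        rw [hMcard]
      push_cast at h12
      exact h12
    have he1 : 2 * m - 2 = (t - 1) + (t - 1) + (t + t) := by omega
    have he2 : m - 2 = (t - 1) + (t - 1) := by omega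
    have he3 : (p : ℂ) ^ t = (p : ℂ) ^ (t - 1) * p := by
      rw [← pow_succ]
      congr 1
      omega
    have hKval : (K.card : ℂ) = (p : ℂ) ^ (t - 1) * (p : ℂ) ^ (t - 1) * p := by
      apply mul_right_cancel₀ hp0
      rw [hKC, he3]
      ring
    have hMval : (Mf.card : ℂ)
        = 1 + (p : ℂ) ^ t * (p : ℂ) ^ (t - 1) - ((S + (p : ℂ) ^ t + 1) / p) := by
      have hτ : (T₀ : ℂ) = (S + (p : ℂ) ^ t + 1) / p := by
        rw [hSval]
        field_simp
        ring
      rw [← hτ]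
      linear_combination hMC
    rw [hWC, hDC, hZC, he1, he2, pow_add, pow_add, pow_add, hKval, hMval, he3]
    field_simp
    ring
end

section
/- The number of elements b ∈ F_q^* such that the unique v ∈ Γ with Tr_{q/t}(bv) = 0 satisfies Tr(v^{p^t−1}) = 0 is exactly ((p^m − 1) + (p^t − 1)·S)/p. -/
open Finset

lemma card_ker_trace (F : Type) [Field F] [Fintype F] [DecidableEq F] (E : Subfield F) :
    (univ.filter fun x : F => Algebra.trace E F x = 0).card * Nat.card E = Fintype.card F := by
  classical
  have : Module.Finite E F := Module.Finite.of_finite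
  have hsurj := Algebra.trace_surjective E F
  set f := (Algebra.trace E F).toAddMonoidHom with hf
  have h1 : Nat.card F = Nat.card (F ⧸ f.ker) * Nat.card f.ker :=
    AddSubgroup.card_eq_card_quotient_mul_card_addSubgroup f.ker
  have h2 : Nat.card (F ⧸ f.ker) = Nat.card E :=
    Nat.card_congr (QuotientAddGroup.quotientKerEquivOfSurjective f hsurj).toEquiv
  have h3 : (univ.filter fun x : F => Algebra.trace E F x = 0).card = Nat.card f.ker := by
    rw [Nat.card_eq_fintype_card, ← Fintype.card_subtype]
    exact Fintype.card_congr (Equiv.subtypeEquivRight fun x => by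
      simp [f, AddMonoidHom.mem_ker])
  rw [h3, ← Nat.card_eq_fintype_card, h1, h2, mul_comm]

lemma char_sum (p : ℕ) [hp : Fact p.Prime] (ζ : ℂ)
    (hζ : ζ = Complex.exp (2 * Real.pi * Complex.I / p)) (a : ZMod p) :
    ∑ z : ZMod p, ζ ^ (z * a).val = if a = 0 then (p : ℂ) else 0 := by
  have hp1 : 1 < p := hp.out.one_lt
  have hprim : IsPrimitiveRoot ζ p := hζ ▸ Complex.isPrimitiveRoot_exp p hp.out.ne_zero
  by_cases ha : a = 0
  · subst ha
    rw [if_pos rfl]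
    have : ∀ z : ZMod p, ζ ^ (z * 0).val = 1 := by intro z; rw [mul_zero, ZMod.val_zero, pow_zero]
    rw [Finset.sum_congr rfl (fun z _ => this z), Finset.sum_const, card_univ, ZMod.card]
    simp
  · rw [if_neg ha]
    have h1 : ∑ z : ZMod p, ζ ^ (z * a).val = ∑ z : ZMod p, ζ ^ z.val :=
      Fintype.sum_equiv (Equiv.mulRight₀ a ha) _ _ (fun z => rfl)
    rw [h1]
    have h2 : ∑ z : ZMod p, ζ ^ z.val = ∑ i ∈ range p, ζ ^ i := by
      refine Finset.sum_bij' (fun z _ => z.val) (fun i _ => (i : ZMod p)) ?_ ?_ ?_ ?_ ?_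
      · intro z _; exact mem_range.mpr (ZMod.val_lt z)
      · intro i _; exact mem_univ _
      · intro z _; exact ZMod.natCast_zmod_val z
      · intro i hi; exact ZMod.val_cast_of_lt (mem_range.mp hi)
      · intro z _; rfl
    rw [h2, hprim.geom_sum_eq_zero hp1]

lemma pow_inj_aux {G : Type*} [Group G] (α : G) (P : ℕ) (hP : 2 ≤ P)
    (horder : orderOf α = P ^ 2 - 1) {j j' : ℕ} (hj : j ≤ P) (hj' : j' ≤ P)
    (h : α ^ (j * (P - 1)) = α ^ (j' * (P - 1))) : j = j' := by
  rw [pow_eq_pow_iff_modEq, horder] at h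
  have h2 : ((P ^ 2 - 1 : ℕ) : ℤ) ∣ ((j' * (P - 1) : ℕ) : ℤ) - ((j * (P - 1) : ℕ) : ℤ) := h.dvd
  have e1 : ((P ^ 2 - 1 : ℕ) : ℤ) = ((P : ℤ) + 1) * ((P : ℤ) - 1) := by
    push_cast [Nat.cast_sub (by nlinarith : 1 ≤ P ^ 2)]; ring
  have e2 : ((j' * (P - 1) : ℕ) : ℤ) - ((j * (P - 1) : ℕ) : ℤ)
      = ((j' : ℤ) - j) * ((P : ℤ) - 1) := by
    push_cast [Nat.cast_sub (by omega : 1 ≤ P)]; ring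
  rw [e1, e2] at h2
  have h3 : ((P : ℤ) + 1) ∣ ((j' : ℤ) - j) :=
    (mul_dvd_mul_iff_right (by omega : ((P : ℤ) - 1) ≠ 0)).mp h2
  have h4 : (P + 1) ∣ ((j' : ℤ) - j).natAbs := by
    have h3' : ((P + 1 : ℕ) : ℤ) ∣ ((j' : ℤ) - j) := by exact_mod_cast h3
    exact Int.natCast_dvd_natCast.mp (h3'.trans (Int.dvd_natAbs.mpr dvd_rfl))
  have h5 : ((j' : ℤ) - j).natAbs ≤ P := by omega
  rcases Nat.eq_zero_of_dvd_of_lt h4 (by omega) with h6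
  omega

/-- The number of `b ∈ F_q^*` such that the unique `v ∈ Γ` with
`Tr_{q/t}(bv) = 0` satisfies `Tr(v^{p^t-1}) = 0` is exactly `((p^m-1) + (p^t-1)·S)/p`. -/
theorem stmt13 (p t m : ℕ) [Fact p.Prime] (ht : 2 < t) (hm : m = 2 * t)
    (F : Type) [Field F] [Fintype F] [DecidableEq F] [Algebra (ZMod p) F]
    (hF : Fintype.card F = p ^ m)
    (E : Subfield F) (hE : Nat.card E = p ^ t)
    (α : Fˣ) (hα : ∀ x : Fˣ, x ∈ Subgroup.zpowers α)
    (Γ : Set F) (hΓ : Γ = {v : F | ∃ j ≤ p ^ t, v = (α : F) ^ j})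
    (ζ : ℂ) (hζ : ζ = Complex.exp (2 * Real.pi * Complex.I / p))
    (χ : F → ℂ) (hχ : ∀ x, χ x = ζ ^ (Algebra.trace (ZMod p) F x).val)
    (Δ : Finset F) (hΔ : Δ = univ.filter (fun x : F => x ^ (p ^ t + 1) = 1))
    (S : ℂ) (hS : S = ∑ z ∈ ({0}ᶜ : Finset (ZMod p)), ∑ x ∈ Δ, χ (algebraMap (ZMod p) F z * x)) :
    (Set.ncard {b : F | b ≠ 0 ∧ ∃ v ∈ Γ, Algebra.trace E F (b * v) = 0 ∧
        Algebra.trace (ZMod p) F (v ^ (p ^ t - 1)) = 0} : ℂ)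
      = (((p : ℂ) ^ m - 1) + ((p : ℂ) ^ t - 1) * S) / p := by
  classical
  have hp : p.Prime := Fact.out
  set P := p ^ t with hPdef
  have hP2 : 2 ≤ P := by
    calc 2 ≤ p ^ 1 := by simpa using hp.two_le
    _ ≤ P := Nat.pow_le_pow_right hp.pos (by omega)
  have hcard : Fintype.card F = P ^ 2 := by
    rw [hF, hm, hPdef, ← pow_mul, mul_comm]
  have hP8 : 8 ≤ P := by
    calc (8 : ℕ) = 2 ^ 3 := by norm_num
    _ ≤ p ^ 3 := Nat.pow_le_pow_left hp.two_le 3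
    _ ≤ P := Nat.pow_le_pow_right hp.pos ht
  have hPP : P ^ 2 = P * P := sq P
  have hPmul : 2 * P ≤ P * P := Nat.mul_le_mul_right P hP2
  have hfact : (P - 1) * (P + 1) = P ^ 2 - 1 := by
    have e : P * (P + 1) = P ^ 2 + P := by ring
    rw [Nat.sub_mul]; omega
  have horder : orderOf α = P ^ 2 - 1 := by
    rw [orderOf_eq_card_of_forall_mem_zpowers hα, Nat.card_eq_fintype_card,
      Fintype.card_units, hcard]
  have hα1 : (α : F) ^ (P ^ 2 - 1) = 1 := by
    rw [← Units.val_pow_eq_pow_val, ← horder, pow_orderOf_eq_one, Units.val_one]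
  -- Γ as a Finset
  set Γfin : Finset F := (range (P + 1)).image (fun j => (α : F) ^ j) with hΓfin
  have powinj : ∀ j ≤ P, ∀ j' ≤ P,
      (α : F) ^ (j * (P - 1)) = (α : F) ^ (j' * (P - 1)) → j = j' := by
    intro j hj j' hj' h
    refine pow_inj_aux α P hP2 horder hj hj' (Units.ext ?_)
    simpa [Units.val_pow_eq_pow_val] using h
  have hjinj : ∀ j ≤ P, ∀ j' ≤ P, (α : F) ^ j = (α : F) ^ j' → j = j' := by
    intro j hj j' hj' h
    have h' : α ^ j = α ^ j' := Units.ext (by simpa [Units.val_pow_eq_pow_val] using h)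
    rw [pow_eq_pow_iff_modEq, horder] at h'
    exact h'.eq_of_lt_of_lt (by omega) (by omega)
  have hΓmem : ∀ v : F, v ∈ Γfin ↔ v ∈ Γ := by
    intro v
    simp only [hΓfin, mem_image, mem_range, hΓ, Set.mem_setOf_eq, Nat.lt_succ_iff]
    constructor
    · rintro ⟨j, hj, rfl⟩; exact ⟨j, hj, rfl⟩
    · rintro ⟨j, hj, rfl⟩; exact ⟨j, hj, rfl⟩
  have hΓ0 : ∀ v ∈ Γfin, v ≠ 0 := by
    intro v hv
    rcases mem_image.mp hv with ⟨j, _, rfl⟩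
    exact pow_ne_zero _ (Units.ne_zero α)
  -- the bijection Γ → Δ, v ↦ v^(P-1)
  have hbij : ∀ C : F → Prop, ∀ _ : DecidablePred C,
      (Γfin.filter (fun v => C (v ^ (P - 1)))).card = (Δ.filter (fun x => C x)).card := by
    intro C instC
    have key : ∀ j : ℕ, ((α : F) ^ j) ^ ((P - 1) * (P + 1)) = 1 := by
      intro j
      rw [← pow_mul, hfact, mul_comm, pow_mul, hα1, one_pow]
    refine Finset.card_bij (fun v _ => v ^ (P - 1)) ?_ ?_ ?_
    · intro v hv
      rcases mem_filter.mp hv with ⟨hvΓ, hvC⟩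
      rcases mem_image.mp hvΓ with ⟨j, _, rfl⟩
      refine mem_filter.mpr ⟨?_, hvC⟩
      rw [hΔ, mem_filter]
      refine ⟨mem_univ _, ?_⟩
      rw [← pow_mul]
      exact key j
    · intro v hv v' hv' h
      rcases mem_image.mp (mem_filter.mp hv).1 with ⟨j, hj, rfl⟩
      rcases mem_image.mp (mem_filter.mp hv').1 with ⟨j', hj', rfl⟩
      rw [← pow_mul, ← pow_mul] at h
      rw [powinj j (Nat.lt_succ_iff.mp (mem_range.mp hj)) j'
        (Nat.lt_succ_iff.mp (mem_range.mp hj')) h]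
    · intro x hx
      rcases mem_filter.mp hx with ⟨hxΔ, hxC⟩
      rw [hΔ, mem_filter] at hxΔ
      have hx1 : x ^ (P + 1) = 1 := hxΔ.2
      have hx0 : x ≠ 0 := by
        intro h; rw [h, zero_pow (by omega : P + 1 ≠ 0)] at hx1; exact zero_ne_one hx1
      set u : Fˣ := Units.mk0 x hx0 with hu
      obtain ⟨n, hn⟩ := (mem_powers_iff_mem_zpowers).mpr (hα u)
      simp only at hn
      set n' := n % (P ^ 2 - 1) with hn'def
      have hn'lt : n' < P ^ 2 - 1 := Nat.mod_lt _ (by omega)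
      have hmod : α ^ n' = α ^ n := by
        rw [hn'def, ← horder]; exact pow_mod_orderOf α n
      have hu1 : u ^ (P + 1) = 1 := by
        ext; rw [Units.val_pow_eq_pow_val]; simpa [hu] using hx1
      have hdvd : (P ^ 2 - 1) ∣ n' * (P + 1) := by
        rw [← horder]
        apply orderOf_dvd_of_pow_eq_one
        rw [pow_mul, hmod, hn, hu1]
      rw [← hfact] at hdvd
      have hdvd2 : (P - 1) ∣ n' := by
        have := (Nat.mul_dvd_mul_iff_right (by omega : 0 < P + 1)).mp hdvd
        exact this
      obtain ⟨j, hj⟩ := hdvd2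
      have hjle : j ≤ P := by
        by_contra hcon
        push_neg at hcon
        have : (P - 1) * (P + 1) ≤ (P - 1) * j := Nat.mul_le_mul_left _ (by omega)
        rw [← hj, hfact] at this
        omega
      have hvx : ((α : F) ^ j) ^ (P - 1) = x := by
        rw [← pow_mul, mul_comm j (P - 1), ← hj]
        have h2 : (α ^ n' : Fˣ) = u := by rw [hmod]; exact hn
        rw [← Units.val_pow_eq_pow_val, h2]
        rfl
      refine ⟨(α : F) ^ j, mem_filter.mpr ⟨mem_image.mpr ⟨j, mem_range.mpr (by omega), rfl⟩, ?_⟩, hvx⟩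
      rw [hvx]; exact hxC
  have cardΓfin : Γfin.card = P + 1 := by
    rw [hΓfin, card_image_of_injOn, card_range]
    intro j hj j' hj' h
    exact hjinj j (Nat.lt_succ_iff.mp (mem_range.mp hj)) j'
      (Nat.lt_succ_iff.mp (mem_range.mp hj')) h
  have cardΔ : Δ.card = P + 1 := by
    have := hbij (fun _ => True) (fun _ => inferInstance)
    simpa [cardΓfin] using this.symm
  -- kernel of relative trace
  set K : Finset F := univ.filter (fun x => Algebra.trace E F x = 0) with hK
  have cardK : K.card = P := by
    have h := card_ker_trace F E
    rw [hE, hcard, pow_two] at h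
    exact Nat.eq_of_mul_eq_mul_right (by omega) h
  have Kstruct : ∀ u : F, u ≠ 0 → Algebra.trace E F u = 0 →
      ∀ x : F, Algebra.trace E F x = 0 → ∃ c : E, x = (c : F) * u := by
    intro u hu htu x htx
    have hEcard : Fintype.card E = P := by rw [← Nat.card_eq_fintype_card, hE]
    have hsub : (univ : Finset E).image (fun c : E => (c : F) * u) ⊆ K := by
      intro y hy
      rcases mem_image.mp hy with ⟨c, _, rfl⟩
      rw [hK, mem_filter]
      refine ⟨mem_univ _, ?_⟩
      have : (c : F) * u = c • u := (Algebra.smul_def c u).symm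
      rw [this, map_smul, htu, smul_zero]
    have hcardim : ((univ : Finset E).image (fun c : E => (c : F) * u)).card = P := by
      rw [Finset.card_image_of_injective _ ?_, card_univ, hEcard]
      intro c₁ c₂ h
      exact Subtype.ext (mul_right_cancel₀ hu h)
    have heq : (univ : Finset E).image (fun c : E => (c : F) * u) = K :=
      Finset.eq_of_subset_of_card_le hsub (by rw [cardK, hcardim])
    have hxK : x ∈ K := by rw [hK, mem_filter]; exact ⟨mem_univ _, htx⟩
    rw [← heq] at hxK
    rcases mem_image.mp hxK with ⟨c, _, hc⟩
    exact ⟨c, hc.symm⟩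
  have uniq : ∀ b : F, b ≠ 0 → ∀ v ∈ Γfin, ∀ v' ∈ Γfin,
      Algebra.trace E F (b * v) = 0 → Algebra.trace E F (b * v') = 0 → v = v' := by
    intro b hb v hv v' hv' h1 h2
    have hv0 := hΓ0 v hv
    have hv'0 := hΓ0 v' hv'
    obtain ⟨c, hc⟩ := Kstruct (b * v) (mul_ne_zero hb hv0) h1 (b * v') h2
    have hvv : v' = (c : F) * v := by
      apply mul_left_cancel₀ hb
      rw [hc]; ring
    have hc0 : (c : F) ≠ 0 := by
      intro h; apply hv'0; rw [hvv, h, zero_mul]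
    have hcE : c ≠ 0 := fun h => hc0 (by rw [h]; simp)
    have hEcard : Fintype.card E = P := by rw [← Nat.card_eq_fintype_card, hE]
    have hcpow : (c : F) ^ (P - 1) = 1 := by
      have h := FiniteField.pow_card_sub_one_eq_one c hcE
      rw [hEcard] at h
      calc (c : F) ^ (P - 1) = ((c ^ (P - 1) : E) : F) := by push_cast; ring
      _ = 1 := by rw [h]; simp
    have hpow : v' ^ (P - 1) = v ^ (P - 1) := by
      rw [hvv, mul_pow, hcpow, one_mul]
    rcases mem_image.mp hv with ⟨j, hj, rfl⟩
    rcases mem_image.mp hv' with ⟨j', hj', rfl⟩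
    rw [← pow_mul, ← pow_mul] at hpow
    rw [powinj j' (Nat.lt_succ_iff.mp (mem_range.mp hj')) j
      (Nat.lt_succ_iff.mp (mem_range.mp hj)) hpow]
  have cardM : ∀ v ∈ Γfin,
      (univ.filter (fun b : F => b ≠ 0 ∧ Algebra.trace E F (b * v) = 0)).card = P - 1 := by
    intro v hv
    have hv0 := hΓ0 v hv
    have h1 : (univ.filter (fun b : F => Algebra.trace E F (b * v) = 0)).card = K.card := by
      refine Finset.card_bij (fun b _ => b * v) ?_ ?_ ?_
      · intro b hb
        rw [hK, mem_filter]
        exact ⟨mem_univ _, (mem_filter.mp hb).2⟩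
      · intro b _ b' _ h
        exact mul_right_cancel₀ hv0 h
      · intro x hx
        have hx2 : Algebra.trace E F x = 0 := (mem_filter.mp hx).2
        refine ⟨x * v⁻¹, ?_, ?_⟩
        · refine mem_filter.mpr ⟨mem_univ _, ?_⟩
          have he : x * v⁻¹ * v = x := by field_simp
          rw [he]; exact hx2
        · field_simp
    have h2 : univ.filter (fun b : F => b ≠ 0 ∧ Algebra.trace E F (b * v) = 0)
        = (univ.filter (fun b : F => Algebra.trace E F (b * v) = 0)).erase 0 := by
      ext b
      simp only [mem_filter, mem_univ, true_and, mem_erase]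
    rw [h2, Finset.card_erase_of_mem (by simp), h1, cardK]
  -- main counting
  set Γg : Finset F := Γfin.filter (fun v => Algebra.trace (ZMod p) F (v ^ (P - 1)) = 0) with hΓg
  set T : Finset F := univ.filter (fun b : F => b ≠ 0 ∧ ∃ v ∈ Γfin,
      Algebra.trace E F (b * v) = 0 ∧ Algebra.trace (ZMod p) F (v ^ (P - 1)) = 0) with hT
  have hTbi : T = Γg.biUnion (fun v => univ.filter
      (fun b : F => b ≠ 0 ∧ Algebra.trace E F (b * v) = 0)) := by
    ext b
    simp only [hT, hΓg, mem_filter, mem_univ, true_and, mem_biUnion]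
    constructor
    · rintro ⟨hb, v, hv, h1, h2⟩; exact ⟨v, ⟨hv, h2⟩, hb, h1⟩
    · rintro ⟨v, ⟨hv, h2⟩, hb, h1⟩; exact ⟨hb, v, hv, h1, h2⟩
  have cardT : T.card = Γg.card * (P - 1) := by
    rw [hTbi, card_biUnion, Finset.sum_congr rfl (fun v hv => cardM v (mem_of_mem_filter v hv)),
      Finset.sum_const, smul_eq_mul]
    intro v hv v' hv' hne
    simp only [disjoint_left, mem_filter, mem_univ, true_and]
    rintro b ⟨hb, h1⟩ ⟨_, h2⟩
    exact hne (uniq b hb v (mem_of_mem_filter v hv) v' (mem_of_mem_filter v' hv') h1 h2)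
  have hsetT : {b : F | b ≠ 0 ∧ ∃ v ∈ Γ, Algebra.trace E F (b * v) = 0 ∧
      Algebra.trace (ZMod p) F (v ^ (P - 1)) = 0} = (T : Set F) := by
    ext b
    simp only [Set.mem_setOf_eq, coe_filter, mem_univ, true_and, hT]
    constructor
    · rintro ⟨hb, v, hv, h⟩; exact ⟨hb, v, (hΓmem v).mpr hv, h⟩
    · rintro ⟨hb, v, hv, h⟩; exact ⟨hb, v, (hΓmem v).mp hv, h⟩
  -- character sum
  have hcharsum : (p : ℂ) * ((Δ.filter (fun x => Algebra.trace (ZMod p) F x = 0)).card : ℂ)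
      = S + (P + 1 : ℕ) := by
    have hsplit : ∑ z : ZMod p, ∑ x ∈ Δ, χ (algebraMap (ZMod p) F z * x)
        = (Δ.card : ℂ) + S := by
      rw [← Finset.sum_add_sum_compl ({0} : Finset (ZMod p)), ← hS]
      congr 1
      rw [Finset.sum_singleton]
      have : ∀ x ∈ Δ, χ (algebraMap (ZMod p) F 0 * x) = 1 := by
        intro x _
        rw [map_zero, zero_mul, hχ, map_zero, ZMod.val_zero, pow_zero]
      rw [Finset.sum_congr rfl this, Finset.sum_const, nsmul_eq_mul, mul_one]
    have heval : ∑ z : ZMod p, ∑ x ∈ Δ, χ (algebraMap (ZMod p) F z * x)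
        = (p : ℂ) * ((Δ.filter (fun x => Algebra.trace (ZMod p) F x = 0)).card : ℂ) := by
      rw [Finset.sum_comm]
      have hinner : ∀ x ∈ Δ, ∑ z : ZMod p, χ (algebraMap (ZMod p) F z * x)
          = if Algebra.trace (ZMod p) F x = 0 then (p : ℂ) else 0 := by
        intro x _
        have : ∀ z : ZMod p, χ (algebraMap (ZMod p) F z * x)
            = ζ ^ ((z * Algebra.trace (ZMod p) F x).val) := by
          intro z
          rw [hχ]
          congr 2
          rw [← Algebra.smul_def, map_smul, smul_eq_mul]
        rw [Finset.sum_congr rfl (fun z _ => this z)]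
        exact char_sum p ζ hζ _
      rw [Finset.sum_congr rfl hinner, ← Finset.sum_filter, Finset.sum_const, nsmul_eq_mul,
        mul_comm]
    rw [← heval, hsplit, cardΔ]
    push_cast
    ring
  have hgood : Γg.card = (Δ.filter (fun x => Algebra.trace (ZMod p) F x = 0)).card :=
    hbij (fun x => Algebra.trace (ZMod p) F x = 0) inferInstance
  -- finish
  rw [hsetT, Set.ncard_coe_finset, cardT]
  have hpne : (p : ℂ) ≠ 0 := Nat.cast_ne_zero.mpr hp.ne_zero
  rw [eq_div_iff hpne]
  have hPC : ((P : ℕ) : ℂ) = (p : ℂ) ^ t := by push_cast [hPdef]; ring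
  have hmC : (p : ℂ) ^ m = ((P : ℕ) : ℂ) ^ 2 := by
    rw [hPC, hm, ← pow_mul, mul_comm]
  rw [← hgood] at hcharsum
  rw [hmC]
  push_cast [Nat.cast_sub (by omega : 1 ≤ P)] at hcharsum ⊢
  simp only [hPC] at hcharsum ⊢
  linear_combination ((p : ℂ) ^ t - 1) * hcharsum
end
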